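/- arXiv:1508.02793 — 4 statements merged into one kernel-verified Lean document; each statement's English description precedes it below -/
import Mathlib

section
/- The number of Motzkin paths of length n ≥ 1 with exactly one ascent equals Fib(n+3) − n − 2, where Fib is the Fibonacci sequence with Fib(0)=0, Fib(1)=1. -/
inductive Step : Type
  | U | F | D
  deriving DecidableEq

instance instFintypeStep : Fintype Step :=
  ⟨{Step.U, Step.F, Step.D}, fun x => by cases x <;> simp⟩

def stepVal : Step → ℤ
  | .U => 1
  | .F => 0
  | .D => -1

/-- Height of the path after the first `i` steps. -/
def ht (p : List Step) (i : ℕ) : ℤ := ((p.take i).map stepVal).sum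

/-- A Motzkin path: starts and ends at height 0 and stays nonnegative. -/
def IsMotzkin (p : List Step) : Prop :=
  ht p p.length = 0 ∧ ∀ i ≤ p.length, 0 ≤ ht p i

instance : DecidablePred IsMotzkin := fun p => by
  unfold IsMotzkin; infer_instance

/-- Number of ascents: maximal runs of up steps (counted at their last up step). -/
def asc (p : List Step) : ℕ :=
  ((List.range p.length).filter
    (fun i => p[i]? == some Step.U && p[i+1]? != some Step.U)).length

/-- Number of occurrences of `w` as a consecutive subword of `p`. -/
def countSubword (w p : List Step) : ℕ :=
  ((List.range p.length).filter (fun i => w.isPrefixOf (p.drop i))).length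

/-- Number of plateaus: occurrences of a subword U F^k D for some k ≥ 0. -/
def plt (p : List Step) : ℕ :=
  ((List.range p.length).filter (fun i =>
    (List.range p.length).any (fun k =>
      (Step.U :: (List.replicate k Step.F ++ [Step.D])).isPrefixOf (p.drop i)))).length

open Finset

def allLists : ℕ → Finset (List Step)
  | 0 => {[]}
  | n+1 => (Finset.univ ×ˢ allLists n).image fun x => x.1 :: x.2

lemma mem_allLists : ∀ {n : ℕ} {p : List Step}, p ∈ allLists n ↔ p.length = n := by
  intro n
  induction n with
  | zero => intro p; simp [allLists, List.length_eq_zero_iff]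
  | succ n ih => intro p; cases p <;> simp [allLists, ih]

def QSet (k m : ℕ) : Finset (List Step) :=
  (allLists m).filter fun q => Step.U ∉ q ∧ q.count Step.D = k

lemma mem_QSet {k m : ℕ} {q : List Step} :
    q ∈ QSet k m ↔ q.length = m ∧ Step.U ∉ q ∧ q.count Step.D = k := by
  simp [QSet, mem_allLists]

lemma QSet_card : ∀ (m k : ℕ), (QSet k m).card = m.choose k := by
  intro m
  induction m with
  | zero =>
    intro k
    cases k with
    | zero =>
      rw [show QSet 0 0 = {[]} by ext q; cases q <;> simp [mem_QSet]]
      simp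
    | succ k =>
      rw [show QSet (k+1) 0 = ∅ by ext q; cases q <;> simp [mem_QSet]]
      simp
  | succ m ih =>
    intro k
    cases k with
    | zero =>
      have : QSet 0 (m+1) = (QSet 0 m).image (Step.F :: ·) := by
        ext q
        cases q with
        | nil => simp [mem_QSet]
        | cons x t =>
          cases x <;> simp [mem_QSet] <;> omega
      rw [this, Finset.card_image_of_injective _ (fun a b h => by simpa using h), ih]
      simp
    | succ k =>
      have : QSet (k+1) (m+1)
          = (QSet (k+1) m).image (Step.F :: ·) ∪ (QSet k m).image (Step.D :: ·) := by
        ext q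
        cases q with
        | nil => simp [mem_QSet]
        | cons x t =>
          cases x <;> simp [mem_QSet] <;> omega
      have hdisj : Disjoint ((QSet (k+1) m).image (Step.F :: ·))
          ((QSet k m).image (Step.D :: ·)) := by
        rw [Finset.disjoint_left]
        rintro q hq hq'
        simp only [Finset.mem_image] at hq hq'
        obtain ⟨a, _, rfl⟩ := hq
        obtain ⟨b, _, h⟩ := hq'
        exact absurd h (by simp)
      rw [this, Finset.card_union_of_disjoint hdisj, Finset.card_image_of_injective _
        (fun a b h => by simpa using h), Finset.card_image_of_injective _
        (fun a b h => by simpa using h), ih, ih, Nat.choose_succ_succ']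
      omega

def enc (a k : ℕ) (q : List Step) : List Step :=
  List.replicate a Step.F ++ (List.replicate k Step.U ++ q)

lemma enc_length (a k : ℕ) (q : List Step) : (enc a k q).length = a + k + q.length := by
  simp [enc]; ring

lemma ht_append (xs ys : List Step) (i : ℕ) :
    ht (xs ++ ys) i = ht xs i + ht ys (i - xs.length) := by
  unfold ht
  rw [List.take_append, List.map_append, List.sum_append]

lemma ht_replicate_F (a i : ℕ) : ht (List.replicate a Step.F) i = 0 := by
  unfold ht
  rw [List.take_replicate, List.map_replicate, List.sum_replicate]
  simp [stepVal]

lemma ht_replicate_U (k i : ℕ) : ht (List.replicate k Step.U) i = min i k := by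
  unfold ht
  rw [List.take_replicate, List.map_replicate, List.sum_replicate]
  simp [stepVal]

lemma sum_noU {q : List Step} (h : Step.U ∉ q) :
    (q.map stepVal).sum = -(q.count Step.D : ℤ) := by
  induction q with
  | nil => simp
  | cons x t ih =>
    simp only [List.mem_cons, not_or] at h
    cases x
    · exact absurd rfl h.1
    · simp [stepVal, ih h.2, List.count_cons]
    · simp [stepVal, ih h.2, List.count_cons]

lemma ht_noU {q : List Step} (h : Step.U ∉ q) (i : ℕ) :
    ht q i = -((q.take i).count Step.D : ℤ) := by
  unfold ht
  exact sum_noU (fun hc => h ((q.take_sublist i).mem hc))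

lemma enc_motzkin {a k : ℕ} {q : List Step} (hk : 1 ≤ k) (hU : Step.U ∉ q)
    (hD : q.count Step.D = k) : IsMotzkin (enc a k q) := by
  have hht : ∀ i, ht (enc a k q) i
      = ((i - a : ℕ) : ℤ) ⊓ (k : ℤ) - ((q.take (i - (a + k))).count Step.D : ℤ) := by
    intro i
    rw [enc, ht_append, ht_replicate_F, ht_append, ht_replicate_U, ht_noU hU]
    simp [List.length_replicate, Nat.sub_sub]
    ring
  constructor
  · rw [hht, enc_length]
    have h2 : a + k + q.length - (a + k) = q.length := by omega
    rw [h2, List.take_length, hD]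
    have h1 : a + k + q.length - a = k + q.length := by omega
    rw [h1]
    push_cast
    omega
  · intro i _
    rw [hht]
    rcases le_or_gt i (a + k) with h | h
    · rw [show i - (a + k) = 0 from by omega]
      simp
      try omega
    · have hle : (q.take (i - (a + k))).count Step.D ≤ k := by
        rw [← hD]; exact (q.take_sublist _).count_le _
      push_cast
      omega

lemma getElem?_U_iff {r q : List Step} {k : ℕ} (hr : Step.U ∉ r) (hq : Step.U ∉ q) (i : ℕ) :
    (r ++ (List.replicate k Step.U ++ q))[i]? = some Step.U ↔ r.length ≤ i ∧ i < r.length + k := by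
  rcases lt_or_ge i r.length with h | h
  · rw [List.getElem?_append_left h]
    constructor
    · intro hc; exact absurd (List.mem_of_getElem? hc) hr
    · intro hc; omega
  · rw [List.getElem?_append_right h]
    rcases lt_or_ge (i - r.length) k with h2 | h2
    · rw [List.getElem?_append_left (by simpa using h2)]
      simp [List.getElem?_replicate, h2]
      omega
    · rw [List.getElem?_append_right (by simpa using h2)]
      constructor
      · intro hc; exact absurd (List.mem_of_getElem? hc) hq
      · intro hc; omega

lemma asc_eq_one {r q : List Step} {k : ℕ} (hk : 1 ≤ k) (hr : Step.U ∉ r)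
    (hq : Step.U ∉ q) : asc (r ++ (List.replicate k Step.U ++ q)) = 1 := by
  unfold asc
  set p := r ++ (List.replicate k Step.U ++ q) with hp
  have hlen : p.length = r.length + k + q.length := by simp [hp]; ring
  have hpred : ∀ i ∈ List.range p.length,
      (p[i]? == some Step.U && p[i+1]? != some Step.U) = (i == r.length + k - 1) := by
    intro i _
    rw [Bool.eq_iff_iff]
    simp only [Bool.and_eq_true, beq_iff_eq, bne_iff_ne, ne_eq]
    rw [hp, getElem?_U_iff hr hq, getElem?_U_iff hr hq]
    omega
  rw [List.filter_congr hpred, ← List.countP_eq_length_filter]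
  have : List.count (r.length + k - 1) (List.range p.length) = 1 :=
    List.count_eq_one_of_mem List.nodup_range (by rw [List.mem_range]; omega)
  simpa [List.count] using this

lemma lastU : ∀ (q : List Step), Step.U ∈ q →
    ∃ m : ℕ, q[m]? = some Step.U ∧ ∀ j : ℕ, m < j → q[j]? ≠ some Step.U := by
  intro q
  induction q with
  | nil => simp
  | cons x t ih =>
    intro hx
    by_cases hU : Step.U ∈ t
    · obtain ⟨m, h1, h2⟩ := ih hU
      refine ⟨m + 1, by simpa using h1, fun j hj => ?_⟩
      cases j with
      | zero => omega
      | succ j => simpa using h2 j (by omega)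
    · have hxU : x = Step.U := by
        rcases List.mem_cons.mp hx with h | h
        · exact h.symm
        · exact absurd h hU
      refine ⟨0, by simp [hxU], fun j hj => ?_⟩
      cases j with
      | zero => omega
      | succ j =>
        simp only [List.getElem?_cons_succ]
        intro hc
        exact hU (List.mem_of_getElem? hc)

lemma decomp {p : List Step} (hM : IsMotzkin p) (ha : asc p = 1) :
    ∃ a k q, 1 ≤ k ∧ Step.U ∉ q ∧ q.count Step.D = k ∧ p = enc a k q := by
  classical
  have hUp : Step.U ∈ p := by
    by_contra hU
    have h0 : asc p = 0 := by
      unfold asc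
      rw [List.length_eq_zero_iff, List.filter_eq_nil_iff]
      intro i _
      simp only [Bool.and_eq_true, beq_iff_eq, bne_iff_ne, ne_eq, not_and, not_not]
      intro hc
      exact absurd (List.mem_of_getElem? hc) hU
    omega
  set r := p.takeWhile (fun s => s != Step.U) with hr
  set d := p.dropWhile (fun s => s != Step.U) with hd
  have hrd : r ++ d = p := List.takeWhile_append_dropWhile
  have hrU : Step.U ∉ r := by
    intro h
    have := List.mem_takeWhile_imp h
    simp at this
  have hdne : d ≠ [] := by
    intro h
    rw [h, List.append_nil] at hrd
    exact hrU (hrd ▸ hUp)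
  have hdU : d.head hdne = Step.U := by
    simpa using List.head_dropWhile_not (fun s => s != Step.U) hdne
  set t := d.tail with htl
  have hdt : d = Step.U :: t := by
    rw [← hdU]; exact (List.cons_head_tail hdne).symm
  set w := t.takeWhile (fun s => s == Step.U) with hw
  set q := t.dropWhile (fun s => s == Step.U) with hqdef
  have htwq : w ++ q = t := List.takeWhile_append_dropWhile
  have hwrep : w = List.replicate w.length Step.U := by
    apply List.eq_replicate_of_mem
    intro b hb
    simpa using List.mem_takeWhile_imp hb
  set k := w.length + 1 with hk
  have hp : p = r ++ (List.replicate k Step.U ++ q) := by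
    rw [← hrd, hdt, ← htwq, hk, List.replicate_succ, ← hwrep]
    simp
  have hplen : p.length = r.length + k + q.length := by
    rw [hp]; simp; ring
  have hq0 : q[0]? ≠ some Step.U := by
    have h2 := List.head?_dropWhile_not (fun s => s == Step.U) t
    rw [← hqdef] at h2
    cases hqc : q with
    | nil => simp
    | cons x t' =>
      rw [hqc] at h2
      simp only [List.head?_cons] at h2
      intro hc
      simp only [List.getElem?_cons_zero, Option.some.injEq] at hc
      rw [hc] at h2
      simp at h2
  have hz2 : ∀ j : ℕ, j < k →
      (r ++ (List.replicate k Step.U ++ q))[r.length + j]? = some Step.U := by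
    intro j hj
    rw [List.getElem?_append_right (by omega), Nat.add_sub_cancel_left,
      List.getElem?_append_left (by simpa using hj)]
    simp [List.getElem?_replicate, hj]
  have hz3 : ∀ j : ℕ, (r ++ (List.replicate k Step.U ++ q))[r.length + k + j]? = q[j]? := by
    intro j
    rw [List.getElem?_append_right (by omega),
      show r.length + k + j - r.length = k + j from by omega,
      List.getElem?_append_right (by simpa using Nat.le_add_right k j),
      show k + j - (List.replicate k Step.U).length = j from by simp]
  have hqU : Step.U ∉ q := by
    intro hUq
    obtain ⟨m, hm1, hm2⟩ := lastU q hUq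
    have hmlen : m < q.length := by
      rcases List.getElem?_eq_some_iff.mp hm1 with ⟨h, _⟩
      exact h
    unfold asc at ha
    obtain ⟨z, hz⟩ := List.length_eq_one_iff.mp ha
    have hmem : ∀ i : ℕ, i < p.length → p[i]? = some Step.U → p[i+1]? ≠ some Step.U →
        i = z := by
      intro i h1 h2 h3
      have : i ∈ (List.range p.length).filter
          (fun i => p[i]? == some Step.U && p[i+1]? != some Step.U) := by
        rw [List.mem_filter, List.mem_range]
        refine ⟨h1, ?_⟩
        simp [h2, h3]
      rw [hz] at this
      simpa using this
    have hc1 : r.length + w.length = z := by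
      apply hmem
      · omega
      · rw [hp, show r.length + w.length = r.length + (k-1) from by omega]
        exact hz2 (k-1) (by omega)
      · rw [hp, show r.length + w.length + 1 = r.length + k + 0 from by omega, hz3]
        exact hq0
    have hc2 : r.length + k + m = z := by
      apply hmem
      · omega
      · rw [hp, hz3]; exact hm1
      · rw [hp, show r.length + k + m + 1 = r.length + k + (m+1) from by omega, hz3]
        exact hm2 (m+1) (by omega)
    omega
  have hrF : ∀ x ∈ r, x = Step.F := by
    intro x hx
    cases x with
    | U => exact absurd hx hrU
    | F => rfl
    | D =>
      exfalso
      set r1 := r.takeWhile (fun s => s != Step.D) with hr1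
      set r2 := r.dropWhile (fun s => s != Step.D) with hr2
      have hr12 : r1 ++ r2 = r := List.takeWhile_append_dropWhile
      have hr1D : Step.D ∉ r1 := by
        intro h
        simpa using List.mem_takeWhile_imp h
      have hr2ne : r2 ≠ [] := by
        intro h
        rw [h, List.append_nil] at hr12
        exact hr1D (hr12 ▸ hx)
      have hr2D : r2.head hr2ne = Step.D := by
        simpa using List.head_dropWhile_not (fun s => s != Step.D) hr2ne
      have hr2c : r2 = Step.D :: r2.tail := by
        rw [← hr2D]; exact (List.cons_head_tail _).symm
      have hr1F : r1 = List.replicate r1.length Step.F := by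
        apply List.eq_replicate_of_mem
        intro b hb
        have hbD : b ≠ Step.D := by simpa using List.mem_takeWhile_imp hb
        have hbr : b ∈ r := (List.takeWhile_sublist _).mem hb
        have hbU : b ≠ Step.U := fun h => hrU (h ▸ hbr)
        cases b
        · exact absurd rfl hbU
        · rfl
        · exact absurd rfl hbD
      have hpd : p = r1 ++ (Step.D :: (r2.tail ++ d)) := by
        rw [← hrd, ← hr12, hr2c]
        simp
      have hneg : ht p (r1.length + 1) = -1 := by
        unfold ht
        rw [hpd, List.take_append,
          List.take_of_length_le (by omega),
          show r1.length + 1 - r1.length = 1 from by omega]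
        rw [List.map_append, List.sum_append, hr1F]
        simp [stepVal]
      have hle : r1.length + 1 ≤ p.length := by
        rw [hpd]
        simp
      have := hM.2 (r1.length + 1) hle
      rw [hneg] at this
      omega
  have hrrep : r = List.replicate r.length Step.F := List.eq_replicate_of_mem hrF
  have hpe : p = enc r.length k q := by
    rw [hp, enc, ← hrrep]
  have hcount : q.count Step.D = k := by
    have hsum : ht p p.length = 0 := hM.1
    unfold ht at hsum
    rw [List.take_length, hpe, enc, List.map_append, List.map_append, List.sum_append,
      List.sum_append, sum_noU hqU, hrrep] at hsum
    simp [stepVal] at hsum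
    omega
  exact ⟨r.length, k, q, by omega, hqU, hcount, hpe⟩

lemma enc_count_U {a k : ℕ} {q : List Step} (hU : Step.U ∉ q) :
    (enc a k q).count Step.U = k := by
  simp [enc, List.count_append, List.count_replicate, List.count_eq_zero.mpr hU]

lemma enc_indexOf {a k : ℕ} {q : List Step} (hk : 1 ≤ k) :
    (enc a k q).idxOf Step.U = a := by
  rw [enc, List.idxOf_append_of_notMem (by simp [List.mem_replicate])]
  obtain ⟨j, rfl⟩ : ∃ j, k = j + 1 := ⟨k - 1, by omega⟩
  rw [List.replicate_succ, List.cons_append, List.idxOf_cons_self]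
  simp

lemma enc_inj {a k a' k' : ℕ} {q q' : List Step} (hk : 1 ≤ k) (hU : Step.U ∉ q)
    (hk' : 1 ≤ k') (hU' : Step.U ∉ q') (h : enc a k q = enc a' k' q') :
    a = a' ∧ k = k' ∧ q = q' := by
  have hk2 : k = k' := by
    rw [← enc_count_U (a := a) (k := k) hU, ← enc_count_U (a := a') (k := k') hU', h]
  have ha2 : a = a' := by
    rw [← enc_indexOf (a := a) (q := q) hk, ← enc_indexOf (a := a') (q := q') hk', h]
  subst hk2; subst ha2
  refine ⟨rfl, rfl, ?_⟩
  unfold enc at h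
  exact List.append_cancel_left (List.append_cancel_left h)

def Parms (n : ℕ) : Finset ((_ : ℕ) × ℕ) :=
  (Finset.Icc 1 n).sigma fun k => Finset.range (n + 1 - k)

lemma S_eq (n : ℕ) :
    (allLists n).filter (fun p => IsMotzkin p ∧ asc p = 1)
      = (Parms n).biUnion (fun x => (QSet x.1 (n - x.2 - x.1)).image (enc x.2 x.1)) := by
  ext p
  simp only [Finset.mem_filter, Finset.mem_biUnion, Parms, Finset.mem_sigma, Finset.mem_Icc,
    Finset.mem_range, Finset.mem_image, mem_allLists, mem_QSet]
  constructor
  · rintro ⟨hlen, hM, ha⟩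
    obtain ⟨a, k, q, hk, hU, hD, rfl⟩ := decomp hM ha
    rw [enc_length] at hlen
    refine ⟨⟨k, a⟩, ?_, q, ?_, rfl⟩
    · dsimp only
      exact ⟨⟨by omega, by omega⟩, by omega⟩
    · dsimp only
      exact ⟨by omega, hU, hD⟩
  · rintro ⟨⟨k, a⟩, ⟨⟨hk1, hkn⟩, han⟩, q, ⟨hql, hqU, hqD⟩, rfl⟩
    refine ⟨by rw [enc_length]; omega, enc_motzkin hk1 hqU hqD, ?_⟩
    have := asc_eq_one (r := List.replicate a Step.F) (k := k) hk1
      (by simp [List.mem_replicate]) hqU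
    simpa [enc] using this

lemma card_S (n : ℕ) :
    ((allLists n).filter (fun p => IsMotzkin p ∧ asc p = 1)).card
      = ∑ x ∈ Parms n, (n - x.2 - x.1).choose x.1 := by
  rw [S_eq, Finset.card_biUnion]
  · refine Finset.sum_congr rfl fun x hx => ?_
    rw [Finset.card_image_of_injOn, QSet_card]
    intro q hq q' hq' hqq
    unfold enc at hqq
    exact List.append_cancel_left (List.append_cancel_left hqq)
  · rintro ⟨k, a⟩ hx ⟨k', a'⟩ hy hxy
    simp only [Parms, Finset.coe_sigma, Set.mem_sigma_iff, Finset.mem_coe, Finset.mem_Icc, Finset.mem_range] at hx hy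
    rw [Function.onFun, Finset.disjoint_left]
    rintro p hp hp'
    simp only [Finset.mem_image, mem_QSet] at hp hp'
    obtain ⟨q, ⟨hql, hqU, hqD⟩, rfl⟩ := hp
    obtain ⟨q', ⟨hql', hqU', hqD'⟩, h⟩ := hp'
    obtain ⟨h1, h2, h3⟩ := enc_inj hy.1.1 hqU' hx.1.1 hqU h
    exact hxy (by simp [h1, h2])

lemma nat_card_eq (n : ℕ) :
    Nat.card {p : List Step // p.length = n ∧ IsMotzkin p ∧ asc p = 1}
      = ((allLists n).filter (fun p => IsMotzkin p ∧ asc p = 1)).card := by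
  have e : {p : List Step // p.length = n ∧ IsMotzkin p ∧ asc p = 1}
      ≃ {p : List Step // p ∈ (allLists n).filter (fun p => IsMotzkin p ∧ asc p = 1)} :=
    Equiv.subtypeEquivRight (fun p => by
      simp [Finset.mem_filter, mem_allLists, and_assoc])
  rw [Nat.card_congr e]
  exact Nat.card_eq_finsetCard _

lemma sum_arith (n : ℕ) (hn : 1 ≤ n) :
    (∑ x ∈ Parms n, (n - x.2 - x.1).choose x.1) + (n + 2) = Nat.fib (n + 3) := by
  rw [Parms, Finset.sum_sigma]
  have hinner : ∀ k ∈ Finset.Icc 1 n,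
      (∑ a ∈ Finset.range (n + 1 - k), (n - a - k).choose k)
        = (n - k + 1).choose (k + 1) := by
    intro k hk
    simp only [Finset.mem_Icc] at hk
    rw [show n + 1 - k = (n - k) + 1 from by omega]
    rw [show (∑ a ∈ Finset.range (n - k + 1), (n - a - k).choose k)
        = ∑ a ∈ Finset.range (n - k + 1), (n - k + 1 - 1 - a).choose k from
      Finset.sum_congr rfl (fun a ha => by
        simp only [Finset.mem_range] at ha
        congr 1
        omega)]
    rw [Finset.sum_range_reflect (fun m => m.choose k) (n - k + 1)]
    rw [← Nat.sum_Icc_choose (n - k) k]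
    apply (Finset.sum_subset ?_ ?_).symm
    · intro m hm
      simp only [Finset.mem_Icc] at hm
      simp only [Finset.mem_range]
      omega
    · intro m hm hnm
      simp only [Finset.mem_range] at hm
      simp only [Finset.mem_Icc] at hnm
      exact Nat.choose_eq_zero_of_lt (by omega)
  rw [Finset.sum_congr rfl hinner]
  have e1 : (∑ k ∈ Finset.Icc 1 n, (n - k + 1).choose (k + 1))
      = ∑ i ∈ Finset.range n, (n - i).choose (i + 2) := by
    refine Finset.sum_bij' (fun k _ => k - 1) (fun i _ => i + 1) ?_ ?_ ?_ ?_ ?_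
    · intro a ha
      simp only [Finset.mem_Icc] at ha
      simp only [Finset.mem_range]
      omega
    · intro a ha
      simp only [Finset.mem_range] at ha
      simp only [Finset.mem_Icc]
      omega
    · intro a ha
      simp only [Finset.mem_Icc] at ha
      omega
    · intro a ha
      omega
    · intro a ha
      simp only [Finset.mem_Icc] at ha
      congr 1 <;> omega
  have e2 : (∑ i ∈ Finset.range n, (n - i).choose (i + 2))
      = ∑ i ∈ Finset.range n, (i + 1).choose (n + 1 - i) := by
    rw [← Finset.sum_range_reflect]
    refine Finset.sum_congr rfl fun i hi => ?_
    simp only [Finset.mem_range] at hi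
    congr 1 <;> omega
  have e3 : Nat.fib (n + 3) = (∑ i ∈ Finset.range n, (i + 1).choose (n + 1 - i)) + (n + 1) + 1 := by
    have hfib := Nat.fib_succ_eq_sum_choose (n + 2)
    rw [Finset.Nat.sum_antidiagonal_eq_sum_range_succ_mk] at hfib
    simp only [Nat.succ_eq_add_one] at hfib
    rw [show n + 3 = n + 2 + 1 from by omega, hfib]
    rw [Finset.sum_range_succ, Finset.sum_range_succ, Finset.sum_range_succ']
    have c1 : (n + 1).choose (n + 2 - (n + 1)) = n + 1 := by
      rw [show n + 2 - (n + 1) = 1 from by omega, Nat.choose_one_right]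
    have c2 : (n + 2).choose (n + 2 - (n + 2)) = 1 := by
      rw [show n + 2 - (n + 2) = 0 from by omega, Nat.choose_zero_right]
    have c3 : Nat.choose 0 (n + 2 - 0) = 0 := by
      rw [show n + 2 - 0 = (n + 1) + 1 from by omega]
      rfl
    rw [c1, c2, c3]
    have : ∀ i ∈ Finset.range n, (i + 1).choose (n + 2 - (i + 1))
        = (i + 1).choose (n + 1 - i) := by
      intro i hi
      congr 1
      omega
    rw [Finset.sum_congr rfl this]
    omega
  omega

/-- The number of Motzkin paths of length n ≥ 1 with exactly one ascent is
Fib(n+3) − n − 2. -/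
theorem motzkin_one_ascent (n : ℕ) (hn : 1 ≤ n) :
    Nat.card {p : List Step // p.length = n ∧ IsMotzkin p ∧ asc p = 1}
      = Nat.fib (n + 3) - (n + 2) := by
  rw [nat_card_eq, card_S]
  have := sum_arith n hn
  omega
end

section
/- The number of Motzkin paths of length 2n+1 with exactly n ascents equals the binomial coefficient C(n+2, 2). -/
instance : Fintype Step :=
  ⟨{Step.U, Step.F, Step.D}, fun x => by cases x <;> simp⟩

def ud : ℕ → List Step
  | 0 => []
  | n+1 => Step.U :: Step.D :: ud n

def hh : ℕ → List Step
  | 0 => [Step.F]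
  | k+1 => Step.U :: Step.F :: (ud k ++ [Step.D])

def gg (a k b : ℕ) : List Step := ud a ++ (hh k ++ ud b)

def ok : List Step → ℤ → Prop
  | [], h => h = 0
  | s :: t, h => 0 ≤ h + stepVal s ∧ ok t (h + stepVal s)

/- ==================== basic lemmas ==================== -/

lemma length_ud (a : ℕ) : (ud a).length = 2 * a := by
  induction a with
  | zero => rfl
  | succ a ih => simp [ud, ih]; omega

lemma length_hh (k : ℕ) : (hh k).length = 2 * k + 1 := by
  cases k with
  | zero => rfl
  | succ k => simp [hh, length_ud]; omega

lemma length_gg (a k b : ℕ) : (gg a k b).length = 2 * (a + k + b) + 1 := by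
  simp [gg, length_ud, length_hh]; omega

lemma ht_nil (i : ℕ) : ht ([] : List Step) i = 0 := by simp [ht]

lemma ht_zero (p : List Step) : ht p 0 = 0 := by simp [ht]

lemma ht_cons (s : Step) (t : List Step) (i : ℕ) :
    ht (s :: t) (i+1) = stepVal s + ht t i := by
  simp [ht, List.take_succ_cons]

lemma asc_cons (s : Step) (t : List Step) :
    asc (s :: t) = asc t + (if s = Step.U ∧ t.head? ≠ some Step.U then 1 else 0) := by
  unfold asc
  rw [List.length_cons, List.range_succ_eq_map, List.filter_cons, List.filter_map]
  have hpred : ((fun i => (s :: t)[i]? == some Step.U && (s :: t)[i + 1]? != some Step.U) ∘ Nat.succ)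
      = (fun i => t[i]? == some Step.U && t[i+1]? != some Step.U) := by
    funext i; simp [Function.comp]
  rw [hpred]
  have h0 : (s :: t)[0]? = some s := by simp
  have h1 : (s :: t)[0+1]? = t.head? := by simp [List.head?_eq_getElem?]
  split <;> rename_i hc <;> rw [h0, h1] at hc <;> simp at hc <;>
    simp only [List.length_cons, List.length_map] <;>
    [rw [if_pos hc]; rw [if_neg (by tauto)]] <;> omega

lemma asc_le_count (p : List Step) : asc p ≤ p.count Step.U := by
  induction p with
  | nil => simp [asc]
  | cons s t ih =>
    rw [asc_cons, List.count_cons]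
    split <;> rename_i hc
    · rw [if_pos]; omega; exact hc.1.symm ▸ rfl
    · split <;> omega

lemma count_sum (p : List Step) :
    p.count Step.U + p.count Step.D + p.count Step.F = p.length := by
  induction p with
  | nil => simp
  | cons s t ih => cases s <;> simp [List.count_cons] <;> omega

lemma sumVal (p : List Step) :
    (p.map stepVal).sum = (p.count Step.U : ℤ) - p.count Step.D := by
  induction p with
  | nil => simp
  | cons s t ih => cases s <;> simp [stepVal, List.count_cons, ih] <;> push_cast <;> ring

/- ==================== ok ↔ IsMotzkin ==================== -/

lemma ok_iff (p : List Step) : ∀ h : ℤ, ok p h ↔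
    (h + ht p p.length = 0 ∧ ∀ i, 1 ≤ i → i ≤ p.length → 0 ≤ h + ht p i) := by
  induction p with
  | nil =>
    intro h
    simp only [ok, List.length_nil, ht_nil]
    constructor
    · intro h0; exact ⟨by omega, by omega⟩
    · intro ⟨h0, _⟩; omega
  | cons s t ih =>
    intro h
    show (0 ≤ h + stepVal s ∧ ok t (h + stepVal s)) ↔ _
    rw [ih (h + stepVal s)]
    constructor
    · rintro ⟨h1, h2, h3⟩
      constructor
      · rw [List.length_cons, ht_cons]; linarith
      · intro i hi1 hile
        obtain ⟨j, rfl⟩ : ∃ j, i = j + 1 := ⟨i - 1, by omega⟩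
        rw [ht_cons]
        rcases Nat.eq_zero_or_pos j with hj | hj
        · subst hj; rw [ht_zero]; linarith
        · have := h3 j hj (by simp at hile; omega); linarith
    · rintro ⟨h1, h2⟩
      have hA : 0 ≤ h + stepVal s := by
        have := h2 1 le_rfl (by simp)
        rw [show (1:ℕ) = 0 + 1 from rfl, ht_cons, ht_zero] at this; linarith
      refine ⟨hA, ?_, ?_⟩
      · rw [List.length_cons, ht_cons] at h1; linarith
      · intro i hi1 hile
        have := h2 (i+1) (by omega) (by simp; omega)
        rw [ht_cons] at this; linarith

lemma isMotzkin_iff_ok (p : List Step) : IsMotzkin p ↔ ok p 0 := by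
  rw [ok_iff]
  constructor
  · rintro ⟨h1, h2⟩
    exact ⟨by simpa using h1, fun i _ hi => by simpa using h2 i hi⟩
  · rintro ⟨h1, h2⟩
    refine ⟨by simpa using h1, fun i hi => ?_⟩
    rcases Nat.eq_zero_or_pos i with h | h
    · subst h; rw [ht_zero]
    · simpa using h2 i h hi

/- ==================== asc of constructions ==================== -/

lemma asc_cons_ne (s : Step) (t : List Step) (hs : s ≠ Step.U) : asc (s :: t) = asc t := by
  rw [asc_cons, if_neg (by tauto)]; omega

lemma asc_cons_U (t : List Step) (h : t.head? ≠ some Step.U) :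
    asc (Step.U :: t) = asc t + 1 := by
  rw [asc_cons, if_pos ⟨rfl, h⟩]

lemma asc_ud_append (a : ℕ) (X : List Step) : asc (ud a ++ X) = a + asc X := by
  induction a with
  | zero => simp [ud]
  | succ a ih =>
    show asc (Step.U :: Step.D :: (ud a ++ X)) = _
    rw [asc_cons_U _ (by simp), asc_cons_ne _ _ (by simp), ih]; omega

lemma asc_hh_append (k : ℕ) (X : List Step) : asc (hh k ++ X) = k + asc X := by
  cases k with
  | zero => show asc (Step.F :: X) = _; rw [asc_cons_ne _ _ (by simp)]; omega
  | succ k =>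
    show asc (Step.U :: Step.F :: ((ud k ++ [Step.D]) ++ X)) = _
    rw [asc_cons_U _ (by simp), asc_cons_ne _ _ (by simp), List.append_assoc,
      List.singleton_append, asc_ud_append, asc_cons_ne _ _ (by simp)]
    omega

lemma asc_gg (a k b : ℕ) : asc (gg a k b) = a + k + b := by
  have : asc (ud b) = b := by
    have := asc_ud_append b []
    simpa [asc] using this
  rw [gg, asc_ud_append, asc_hh_append, this]; omega

/- ==================== ok of constructions ==================== -/

lemma ok_ud_append (a : ℕ) (X : List Step) (hX : ok X 0) : ok (ud a ++ X) 0 := by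
  induction a with
  | zero => simpa [ud]
  | succ a ih =>
    show ok (Step.U :: Step.D :: (ud a ++ X)) 0
    refine ⟨by norm_num [stepVal], by norm_num [stepVal], ?_⟩
    show ok (ud a ++ X) (0 + stepVal Step.U + stepVal Step.D)
    norm_num [stepVal]
    exact ih

lemma ok_ud_D (k : ℕ) (X : List Step) (hX : ok X 0) : ok (ud k ++ (Step.D :: X)) 1 := by
  induction k with
  | zero =>
    show ok (Step.D :: X) 1
    refine ⟨by norm_num [stepVal], ?_⟩
    show ok X (1 + stepVal Step.D)
    norm_num [stepVal]; exact hX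
  | succ k ih =>
    show ok (Step.U :: Step.D :: (ud k ++ (Step.D :: X))) 1
    refine ⟨by norm_num [stepVal], by norm_num [stepVal], ?_⟩
    show ok (ud k ++ (Step.D :: X)) (1 + stepVal Step.U + stepVal Step.D)
    norm_num [stepVal]; exact ih

lemma ok_gg (a k b : ℕ) : ok (gg a k b) 0 := by
  have hud : ok (ud b) 0 := by
    have := ok_ud_append b [] (by simp [ok])
    simpa using this
  apply ok_ud_append
  cases k with
  | zero =>
    show ok (Step.F :: ud b) 0
    refine ⟨by norm_num [stepVal], ?_⟩
    show ok (ud b) (0 + stepVal Step.F)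
    norm_num [stepVal]; exact hud
  | succ k =>
    show ok (Step.U :: Step.F :: ((ud k ++ [Step.D]) ++ ud b)) 0
    refine ⟨by norm_num [stepVal], by norm_num [stepVal], ?_⟩
    show ok ((ud k ++ [Step.D]) ++ ud b) (0 + stepVal Step.U + stepVal Step.F)
    rw [List.append_assoc, List.singleton_append]
    norm_num [stepVal]
    exact ok_ud_D k (ud b) hud

/- ==================== structure lemmas ==================== -/

lemma no_UU (t : List Step) :
    ¬ (Step.U :: Step.U :: t).count Step.U ≤ asc (Step.U :: Step.U :: t) := by
  have h1 := asc_le_count (Step.U :: t)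
  rw [asc_cons, if_neg (by simp)]
  simp [List.count_cons] at *
  omega

lemma S1 : ∀ (N : ℕ) (p : List Step), p.length ≤ N → ok p 0 → p.count Step.F = 0 →
    p.count Step.U ≤ asc p → ∃ m, p = ud m := by
  intro N
  induction N with
  | zero =>
    intro p hp _ _ _
    have hp0 : p = [] := List.length_eq_zero_iff.mp (by omega)
    exact ⟨0, by rw [hp0]; rfl⟩
  | succ N ih =>
    intro p hlen hok hF hU
    match p with
    | [] => exact ⟨0, rfl⟩
    | Step.F :: t => simp [List.count_cons] at hF
    | Step.D :: t => exact absurd hok.1 (by norm_num [stepVal])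
    | [Step.U] => exact absurd hok.2 (by norm_num [ok, stepVal])
    | Step.U :: Step.U :: t => exact absurd hU (no_UU t)
    | Step.U :: Step.F :: t => simp [List.count_cons] at hF
    | Step.U :: Step.D :: t =>
      have hok' : ok t 0 := by
        have h2 := hok.2.2
        norm_num [stepVal] at h2
        exact h2
      have hF' : t.count Step.F = 0 := by simpa [List.count_cons] using hF
      have hU' : t.count Step.U ≤ asc t := by
        rw [asc_cons_U _ (by simp), asc_cons_ne _ _ (by simp)] at hU
        simp [List.count_cons] at hU
        omega
      obtain ⟨m, rfl⟩ := ih t (by simp at hlen; omega) hok' hF' hU'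
      exact ⟨m + 1, rfl⟩

lemma S2 : ∀ (N : ℕ) (p : List Step), p.length ≤ N → ok p 1 → p.count Step.F = 0 →
    p.count Step.U ≤ asc p → ∃ k b, p = ud k ++ (Step.D :: ud b) := by
  intro N
  induction N with
  | zero =>
    intro p hp hok _ _
    have hp0 : p = [] := List.length_eq_zero_iff.mp (by omega)
    rw [hp0] at hok
    exact absurd hok (by norm_num [ok])
  | succ N ih =>
    intro p hlen hok hF hU
    match p with
    | [] => exact absurd hok (by norm_num [ok])
    | Step.F :: t => simp [List.count_cons] at hF
    | Step.D :: t =>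
      have hok' : ok t 0 := by
        have h2 := hok.2; norm_num [stepVal] at h2; exact h2
      have hU' : t.count Step.U ≤ asc t := by
        rw [asc_cons_ne _ _ (by simp)] at hU
        simp [List.count_cons] at hU; omega
      obtain ⟨m, rfl⟩ := S1 t.length t le_rfl hok' (by simpa [List.count_cons] using hF) hU'
      exact ⟨0, m, rfl⟩
    | [Step.U] => exact absurd hok.2 (by norm_num [ok, stepVal])
    | Step.U :: Step.U :: t => exact absurd hU (no_UU t)
    | Step.U :: Step.F :: t => simp [List.count_cons] at hF
    | Step.U :: Step.D :: t =>
      have hok' : ok t 1 := by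
        have h2 := hok.2.2; norm_num [stepVal] at h2; exact h2
      have hU' : t.count Step.U ≤ asc t := by
        rw [asc_cons_U _ (by simp), asc_cons_ne _ _ (by simp)] at hU
        simp [List.count_cons] at hU; omega
      obtain ⟨k, b, rfl⟩ := ih t (by simp at hlen; omega) hok'
        (by simpa [List.count_cons] using hF) hU'
      exact ⟨k + 1, b, rfl⟩

lemma S0 : ∀ (N : ℕ) (p : List Step), p.length ≤ N → ok p 0 → p.count Step.F = 1 →
    p.count Step.U ≤ asc p → ∃ a k b, p = gg a k b := by
  intro N
  induction N with
  | zero =>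
    intro p hp _ hF _
    have hp0 : p = [] := List.length_eq_zero_iff.mp (by omega)
    rw [hp0] at hF
    simp at hF
  | succ N ih =>
    intro p hlen hok hF hU
    match p with
    | [] => simp at hF
    | Step.F :: t =>
      have hok' : ok t 0 := by
        have h2 := hok.2; norm_num [stepVal] at h2; exact h2
      have hU' : t.count Step.U ≤ asc t := by
        rw [asc_cons_ne _ _ (by simp)] at hU
        simp [List.count_cons] at hU; omega
      obtain ⟨m, rfl⟩ := S1 t.length t le_rfl hok' (by simpa [List.count_cons] using hF) hU'
      exact ⟨0, 0, m, rfl⟩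
    | Step.D :: t => exact absurd hok.1 (by norm_num [stepVal])
    | [Step.U] => exact absurd hok.2 (by norm_num [ok, stepVal])
    | Step.U :: Step.U :: t => exact absurd hU (no_UU t)
    | Step.U :: Step.F :: t =>
      have hok' : ok t 1 := by
        have h2 := hok.2.2; norm_num [stepVal] at h2; exact h2
      have hU' : t.count Step.U ≤ asc t := by
        rw [asc_cons_U _ (by simp), asc_cons_ne _ _ (by simp)] at hU
        simp [List.count_cons] at hU; omega
      obtain ⟨k, b, rfl⟩ := S2 t.length t le_rfl hok'
        (by simpa [List.count_cons] using hF) hU'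
      refine ⟨0, k + 1, b, ?_⟩
      simp [gg, hh, ud, List.append_assoc]
    | Step.U :: Step.D :: t =>
      have hok' : ok t 0 := by
        have h2 := hok.2.2; norm_num [stepVal] at h2; exact h2
      have hU' : t.count Step.U ≤ asc t := by
        rw [asc_cons_U _ (by simp), asc_cons_ne _ _ (by simp)] at hU
        simp [List.count_cons] at hU; omega
      obtain ⟨a, k, b, rfl⟩ := ih t (by simp at hlen; omega) hok'
        (by simpa [List.count_cons] using hF) hU'
      exact ⟨a + 1, k, b, rfl⟩

/- ==================== injectivity ==================== -/

def dec1 : List Step → ℕ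
  | Step.U :: Step.D :: t => dec1 t + 1
  | _ => 0

lemma dec1_ud_F (a : ℕ) (X : List Step) : dec1 (ud a ++ (Step.F :: X)) = a := by
  induction a with
  | zero => rfl
  | succ a ih => show dec1 (Step.U :: Step.D :: (ud a ++ (Step.F :: X))) = _; rw [dec1, ih]

lemma dec1_ud_UF (a : ℕ) (X : List Step) :
    dec1 (ud a ++ (Step.U :: Step.F :: X)) = a := by
  induction a with
  | zero => rfl
  | succ a ih =>
    show dec1 (Step.U :: Step.D :: (ud a ++ (Step.U :: Step.F :: X))) = _
    rw [dec1, ih]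

lemma dec1_ud_D (a : ℕ) (X : List Step) : dec1 (ud a ++ (Step.D :: X)) = a := by
  induction a with
  | zero => rfl
  | succ a ih => show dec1 (Step.U :: Step.D :: (ud a ++ (Step.D :: X))) = _; rw [dec1, ih]

lemma dec1_gg (a k b : ℕ) : dec1 (gg a k b) = a := by
  cases k with
  | zero => exact dec1_ud_F a (ud b)
  | succ k =>
    show dec1 (ud a ++ (Step.U :: Step.F :: ((ud k ++ [Step.D]) ++ ud b))) = _
    exact dec1_ud_UF a _

lemma ud_inj {a b : ℕ} (h : ud a = ud b) : a = b := by
  have := congrArg List.length h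
  rw [length_ud, length_ud] at this
  omega

lemma gg_inj {a k b a' k' b' : ℕ} (h : gg a k b = gg a' k' b') :
    a = a' ∧ k = k' ∧ b = b' := by
  have ha : a = a' := by
    have := congrArg dec1 h
    rwa [dec1_gg, dec1_gg] at this
  subst ha
  have h2 : hh k ++ ud b = hh k' ++ ud b' := List.append_cancel_left h
  match k, k' with
  | 0, 0 =>
    simp only [hh, List.singleton_append, List.cons.injEq] at h2
    exact ⟨rfl, rfl, ud_inj h2.2⟩
  | 0, k'+1 => simp [hh] at h2
  | k+1, 0 => simp [hh] at h2
  | k+1, k'+1 =>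
    simp only [hh, List.cons_append, List.cons.injEq, true_and] at h2
    rw [List.append_assoc, List.append_assoc, List.singleton_append,
      List.singleton_append] at h2
    have hk : k = k' := by
      have := congrArg dec1 h2
      rwa [dec1_ud_D, dec1_ud_D] at this
    subst hk
    have h3 := List.append_cancel_left h2
    simp only [List.cons.injEq, true_and] at h3
    exact ⟨rfl, rfl, ud_inj h3⟩

/- ==================== counting triples ==================== -/

lemma sum_succ_choose (n : ℕ) : ∑ j ∈ Finset.range (n+1), (j+1) = (n+2).choose 2 := by
  induction n with
  | zero => rfl
  | succ m ih =>
    rw [Finset.sum_range_succ, ih, Nat.choose_succ_succ (m+2) 1, Nat.choose_one_right]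
    simp [Nat.succ_eq_add_one]
    omega

lemma card_T (n : ℕ) :
    Nat.card {x : ℕ × ℕ × ℕ // x.1 + x.2.1 + x.2.2 = n} = (n+2).choose 2 := by
  have e1 : {x : ℕ × ℕ × ℕ // x.1 + x.2.1 + x.2.2 = n} ≃
      (Σ j : Fin (n+1), Fin (n + 1 - j.1)) :=
    { toFun := fun ⟨⟨a, k, b⟩, h⟩ => ⟨⟨a, by dsimp at h; omega⟩, ⟨k, by dsimp at h ⊢; omega⟩⟩
      invFun := fun ⟨⟨a, _⟩, ⟨k, hk⟩⟩ => ⟨(a, k, n - a - k), by dsimp; dsimp at hk; omega⟩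
      left_inv := by
        rintro ⟨⟨a, k, b⟩, h⟩
        apply Subtype.ext
        dsimp at h ⊢
        have hb : n - a - k = b := by omega
        simp only [hb]
      right_inv := by rintro ⟨⟨a, ha⟩, ⟨k, hk⟩⟩; rfl }
  rw [Nat.card_congr e1, Nat.card_eq_fintype_card, Fintype.card_sigma]
  simp only [Fintype.card_fin]
  rw [Fin.sum_univ_eq_sum_range (fun j => n + 1 - j) (n+1)]
  rw [← sum_succ_choose n]
  rw [← Finset.sum_range_reflect (fun j => j + 1) (n+1)]
  apply Finset.sum_congr rfl
  intro j hj
  simp at hj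
  omega


/-- The number of Motzkin paths of length 2n+1 with exactly n ascents is C(n+2,2). -/
theorem motzkin_max_ascents_odd (n : ℕ) :
    Nat.card {p : List Step // p.length = 2 * n + 1 ∧ IsMotzkin p ∧ asc p = n}
      = Nat.choose (n + 2) 2 := by
  rw [← card_T n]
  let G : {x : ℕ × ℕ × ℕ // x.1 + x.2.1 + x.2.2 = n} →
      {p : List Step // p.length = 2 * n + 1 ∧ IsMotzkin p ∧ asc p = n} :=
    fun ⟨⟨a, k, b⟩, h⟩ => ⟨gg a k b,
      by rw [length_gg]; dsimp at h; omega,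
      (isMotzkin_iff_ok _).mpr (ok_gg a k b),
      by rw [asc_gg]; dsimp at h; omega⟩
  have hinj : Function.Injective G := by
    rintro ⟨⟨a, k, b⟩, h⟩ ⟨⟨a', k', b'⟩, h'⟩ hEq
    simp only [G, Subtype.mk.injEq] at hEq
    obtain ⟨h1, h2, h3⟩ := gg_inj hEq
    subst h1; subst h2; subst h3; rfl
  have hsurj : Function.Surjective G := by
    rintro ⟨p, hlen, hM, hasc⟩
    have hok : ok p 0 := (isMotzkin_iff_ok p).mp hM
    have hcnt := count_sum p
    have hsv : (p.map stepVal).sum = (p.count Step.U : ℤ) - p.count Step.D := sumVal p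
    have hend : ht p p.length = 0 := hM.1
    have hUD : p.count Step.U = p.count Step.D := by
      unfold ht at hend
      rw [List.take_length] at hend
      omega
    have h1 := asc_le_count p
    have hu : p.count Step.U = n := by omega
    obtain ⟨a, k, b, rfl⟩ := S0 p.length p le_rfl hok (by omega) (by omega)
    have hlg := length_gg a k b
    have hsum : a + k + b = n := by omega
    exact ⟨⟨(a, k, b), hsum⟩, Subtype.ext rfl⟩
  exact (Nat.card_congr (Equiv.ofBijective G ⟨hinj, hsurj⟩)).symm
end

section
/- The number of Motzkin paths of length n ≥ 1 with exactly one plateau equals 2^(n−1) − 1. -/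
def noF : Step → Bool
  | Step.F => false
  | _ => true

abbrev flt (p : List Step) : List Step := p.filter noF

def fdRun : List Step → Bool
  | Step.D :: _ => true
  | Step.F :: t => fdRun t
  | _ => false

def startPl : List Step → Bool
  | Step.U :: t => fdRun t
  | _ => false

def pltS : List Step → ℕ
  | [] => 0
  | x :: t => (if startPl (x :: t) then 1 else 0) + pltS t

def pk : List Step → ℕ
  | Step.U :: Step.D :: t => 1 + pk (Step.D :: t)
  | _ :: t => pk t
  | [] => 0

lemma fdpre_nil (k : ℕ) : ¬ (List.replicate k Step.F ++ [Step.D]) <+: ([] : List Step) := by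
  intro h; have := h.length_le; simp at this

lemma fdpre_cons (k : ℕ) (x : Step) (t : List Step) :
    (List.replicate k Step.F ++ [Step.D]) <+: (x :: t) ↔
      (k = 0 ∧ x = Step.D) ∨ (∃ k', k = k' + 1 ∧ x = Step.F ∧
        (List.replicate k' Step.F ++ [Step.D]) <+: t) := by
  cases k with
  | zero =>
    simp only [List.replicate_zero, List.nil_append, List.cons_prefix_cons]
    constructor
    · rintro ⟨h1, _⟩; exact Or.inl ⟨by trivial, h1.symm⟩
    · rintro (⟨_, h⟩ | ⟨k', hk, _, _⟩)
      · exact ⟨h.symm, List.nil_prefix⟩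
      · omega
  | succ k =>
    rw [List.replicate_succ, List.cons_append, List.cons_prefix_cons]
    constructor
    · rintro ⟨h1, h2⟩; exact Or.inr ⟨k, rfl, h1.symm, h2⟩
    · rintro (⟨h, _⟩ | ⟨k', hk, hx, hp⟩)
      · omega
      · obtain rfl : k' = k := by omega
        exact ⟨hx.symm, hp⟩

lemma fdRun_iff (q : List Step) :
    fdRun q = true ↔ ∃ k, (List.replicate k Step.F ++ [Step.D]) <+: q := by
  induction q with
  | nil => simpa [fdRun] using fun k => fdpre_nil k
  | cons x t ih =>
    cases x with
    | U =>
      simp only [fdRun, fdpre_cons]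
      constructor
      · rintro ⟨⟩
      · rintro ⟨k, (⟨_, h⟩ | ⟨_, _, h, _⟩)⟩ <;> cases h
    | D => exact ⟨fun _ => ⟨0, by simp [fdpre_cons]⟩, fun _ => rfl⟩
    | F =>
      simp only [fdRun, ih]
      constructor
      · rintro ⟨k, h⟩; exact ⟨k + 1, (fdpre_cons _ _ _).2 (Or.inr ⟨k, rfl, rfl, h⟩)⟩
      · rintro ⟨k, h⟩
        rcases (fdpre_cons _ _ _).1 h with ⟨_, h⟩ | ⟨k', _, _, h⟩
        · cases h
        · exact ⟨k', h⟩

lemma startPl_iff (q : List Step) :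
    startPl q = true ↔ ∃ k, (Step.U :: (List.replicate k Step.F ++ [Step.D])) <+: q := by
  cases q with
  | nil =>
    constructor
    · rintro ⟨⟩
    · rintro ⟨k, h⟩; have := h.length_le; simp at this
  | cons x t =>
    cases x with
    | U =>
      simp only [startPl, fdRun_iff]
      constructor
      · rintro ⟨k, h⟩; exact ⟨k, List.cons_prefix_cons.2 ⟨rfl, h⟩⟩
      · rintro ⟨k, h⟩; exact ⟨k, (List.cons_prefix_cons.1 h).2⟩
    | D =>
      constructor
      · rintro ⟨⟩
      · rintro ⟨k, h⟩; cases (List.cons_prefix_cons.1 h).1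
    | F =>
      constructor
      · rintro ⟨⟩
      · rintro ⟨k, h⟩; cases (List.cons_prefix_cons.1 h).1

lemma plt_eq_pltS (p : List Step) : plt p = pltS p := by
  have key : ∀ p : List Step,
      List.countP (fun i => startPl (p.drop i)) (List.range p.length) = pltS p := by
    intro p
    induction p with
    | nil => simp [pltS]
    | cons x t ih =>
      rw [List.length_cons, List.range_succ_eq_map, List.countP_cons,
        List.countP_map]
      have : List.countP ((fun i => startPl ((x :: t).drop i)) ∘ Nat.succ)
          (List.range t.length) = pltS t := by
        rw [← ih]; rfl
      rw [this, pltS]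
      simp only [List.drop_zero]
      omega
  rw [plt, ← List.countP_eq_length_filter, ← key p]
  apply List.countP_congr
  intro i hi
  simp only [List.mem_range] at hi
  simp only [List.any_eq_true, List.mem_range, List.isPrefixOf_iff_prefix,
    startPl_iff]
  constructor
  · rintro ⟨k, _, h⟩; exact ⟨k, h⟩
  · rintro ⟨k, h⟩
    refine ⟨k, ?_, h⟩
    have h1 := h.length_le
    have h2 : (p.drop i).length ≤ p.length := by simp
    simp at h1
    omega

lemma fdRun_head (t : List Step) : fdRun t = ((flt t).head? == some Step.D) := by
  induction t with
  | nil => rfl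
  | cons x t ih =>
    cases x with
    | U => simp [fdRun, noF, List.filter_cons]
    | D => simp [fdRun, noF, List.filter_cons]
    | F => simpa [fdRun, noF, List.filter_cons] using ih

lemma pk_cons_U (w : List Step) :
    pk (Step.U :: w) = pk w + (if w.head? = some Step.D then 1 else 0) := by
  cases w with
  | nil => simp [pk]
  | cons y w' => cases y <;> simp [pk] <;> omega

lemma pk_cons_nonU (x : Step) (w : List Step) (hx : x ≠ Step.U) :
    pk (x :: w) = pk w := by
  cases x with
  | U => exact absurd rfl hx
  | D => cases w with
    | nil => rfl
    | cons y w' => cases y <;> rfl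
  | F => cases w with
    | nil => rfl
    | cons y w' => cases y <;> rfl

lemma pltS_eq_pk (p : List Step) : pltS p = pk (flt p) := by
  induction p with
  | nil => rfl
  | cons x t ih =>
    cases x with
    | U =>
      rw [pltS]
      have hst : startPl (Step.U :: t) = fdRun t := rfl
      rw [hst, fdRun_head]
      have : flt (Step.U :: t) = Step.U :: flt t := by simp [List.filter_cons, noF]
      rw [this, pk_cons_U, ih]
      by_cases h : (flt t).head? = some Step.D <;> simp [h] <;> omega
    | D =>
      rw [pltS]
      have : flt (Step.D :: t) = Step.D :: flt t := by simp [List.filter_cons, noF]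
      rw [this, pk_cons_nonU _ _ (by intro h; cases h), ih]
      simp [startPl]
    | F =>
      rw [pltS]
      have : flt (Step.F :: t) = flt t := by simp [List.filter_cons, noF]
      rw [this, ih]
      simp [startPl]

lemma pk_repD (c : ℕ) : pk (List.replicate c Step.D) = 0 := by
  induction c with
  | zero => rfl
  | succ c ih => rw [List.replicate_succ, pk_cons_nonU _ _ (by intro h; cases h), ih]

lemma pk_repU_repD (b : ℕ) (hb : 1 ≤ b) (c : ℕ) (hc : 1 ≤ c) :
    pk (List.replicate b Step.U ++ List.replicate c Step.D) = 1 := by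
  induction b with
  | zero => omega
  | succ b ih =>
    cases b with
    | zero =>
      obtain ⟨c', rfl⟩ : ∃ c', c = c' + 1 := ⟨c - 1, by omega⟩
      rw [List.replicate_succ, List.replicate_succ]
      simp only [List.replicate_zero, List.nil_append, List.singleton_append]
      rw [show pk (Step.U :: Step.D :: List.replicate c' Step.D)
          = 1 + pk (Step.D :: List.replicate c' Step.D) from rfl,
        pk_cons_nonU _ _ (by intro h; cases h), pk_repD]
    | succ b =>
      rw [List.replicate_succ, List.cons_append, pk_cons_U]
      have hh : ((List.replicate (b+1) Step.U ++ List.replicate c Step.D).head?)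
          = some Step.U := by
        rw [List.replicate_succ]; rfl
      rw [hh]
      have : (if (some Step.U : Option Step) = some Step.D then 1 else 0) = 0 := by
        simp
      rw [this, add_zero]
      exact ih (by omega)

lemma isMotzkin_iff (p : List Step) :
    IsMotzkin p ↔ (p.map stepVal).sum = 0 ∧
      ∀ q, q <+: p → 0 ≤ ((q.map stepVal).sum) := by
  constructor
  · rintro ⟨h0, h1⟩
    constructor
    · simpa [ht, List.take_length] using h0
    · intro q hq
      obtain ⟨r, rfl⟩ := hq
      have := h1 q.length (by simp)
      simpa [ht, List.take_left] using this
  · rintro ⟨h0, h1⟩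
    constructor
    · simpa [ht, List.take_length] using h0
    · intro i _
      exact h1 _ (List.take_prefix i p)

lemma sum_flt (p : List Step) : ((flt p).map stepVal).sum = (p.map stepVal).sum := by
  induction p with
  | nil => rfl
  | cons x t ih =>
    cases x <;> simp [List.filter_cons, noF, stepVal, ih]

lemma prefix_flt_lift (p : List Step) (u : List Step) (hu : u <+: flt p) :
    ∃ q, q <+: p ∧ flt q = u := by
  induction p generalizing u with
  | nil => simp at hu; exact ⟨[], by simp [hu]⟩
  | cons x t ih =>
    by_cases hx : noF x
    · have : flt (x :: t) = x :: flt t := by simp [List.filter_cons, hx]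
      rw [this] at hu
      rcases List.prefix_cons_iff.1 hu with rfl | ⟨u', rfl, hu'⟩
      · exact ⟨[], by simp⟩
      · obtain ⟨q, hq1, hq2⟩ := ih u' hu'
        exact ⟨x :: q, List.cons_prefix_cons.2 ⟨rfl, hq1⟩,
          by simp [List.filter_cons, hx, hq2]⟩
    · have : flt (x :: t) = flt t := by
        simp [List.filter_cons]; simp at hx; simp [hx]
      rw [this] at hu
      obtain ⟨q, hq1, hq2⟩ := ih u hu
      refine ⟨x :: q, List.cons_prefix_cons.2 ⟨rfl, hq1⟩, ?_⟩
      simp only [List.filter_cons]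
      simp only [Bool.not_eq_true] at hx
      rw [hx]
      exact hq2

lemma sum_rep_prefix (b : ℕ) (u : List Step)
    (hu : u <+: (List.replicate b Step.U ++ List.replicate b Step.D)) :
    0 ≤ (u.map stepVal).sum := by
  obtain ⟨k, rfl⟩ : ∃ k, u = (List.replicate b Step.U ++ List.replicate b Step.D).take k :=
    ⟨u.length, List.prefix_iff_eq_take.1 hu⟩
  rw [List.take_append, List.take_replicate, List.take_replicate]
  simp only [List.length_replicate, List.map_append, List.sum_append,
    List.map_replicate, List.sum_replicate]
  simp only [stepVal, nsmul_eq_mul, mul_one, mul_neg_one]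
  have h1 : (min (k - b) b : ℕ) ≤ min k b := by omega
  have h2 : ((min (k - b) b : ℕ) : ℤ) ≤ ((min k b : ℕ) : ℤ) := by exact_mod_cast h1
  omega

lemma sum_repU (a : ℕ) : ((List.replicate a Step.U).map stepVal).sum = a := by
  simp [List.map_replicate, List.sum_replicate, stepVal]

lemma sum_repD (a : ℕ) : ((List.replicate a Step.D).map stepVal).sum = -(a : ℤ) := by
  simp [List.map_replicate, List.sum_replicate, stepVal]

lemma peel_U (w : List Step) :
    ∃ a s, w = List.replicate a Step.U ++ s ∧ s.head? ≠ some Step.U := by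
  induction w with
  | nil => exact ⟨0, [], by simp⟩
  | cons x t ih =>
    by_cases hx : x = Step.U
    · obtain ⟨a, s, rfl, hs⟩ := ih
      exact ⟨a + 1, s, by rw [hx, List.replicate_succ]; rfl, hs⟩
    · refine ⟨0, x :: t, by simp, ?_⟩
      simp only [List.head?_cons, ne_eq, Option.some.injEq]
      exact hx

lemma pk_zero_struct (s : List Step) (hF : ∀ x ∈ s, x ≠ Step.F) (h : pk s = 0) :
    ∃ j i, s = List.replicate j Step.D ++ List.replicate i Step.U := by
  induction s with
  | nil => exact ⟨0, 0, rfl⟩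
  | cons x t ih =>
    have hFt : ∀ x ∈ t, x ≠ Step.F := fun y hy => hF y (List.mem_cons_of_mem _ hy)
    cases x with
    | F => exact absurd rfl (hF Step.F List.mem_cons_self)
    | D =>
      rw [pk_cons_nonU _ _ (by intro hc; cases hc)] at h
      obtain ⟨j, i, rfl⟩ := ih hFt h
      exact ⟨j + 1, i, by rw [List.replicate_succ]; rfl⟩
    | U =>
      rw [pk_cons_U] at h
      have h1 : pk t = 0 := by omega
      have h2 : t.head? ≠ some Step.D := by
        intro hc; rw [hc] at h; simp at h
      obtain ⟨j, i, rfl⟩ := ih hFt h1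
      cases j with
      | zero =>
        refine ⟨0, i + 1, ?_⟩
        simp only [List.replicate_zero, List.nil_append] at *
        rw [List.replicate_succ]
      | succ j =>
        exfalso
        apply h2
        rw [List.replicate_succ]
        rfl

lemma pk_repU_cons_D (a : ℕ) (ha : 1 ≤ a) (s : List Step) :
    pk (List.replicate a Step.U ++ Step.D :: s) = 1 + pk s := by
  induction a with
  | zero => omega
  | succ a ih =>
    cases a with
    | zero =>
      rw [show List.replicate 1 Step.U ++ Step.D :: s = Step.U :: Step.D :: s from rfl,
        show pk (Step.U :: Step.D :: s) = 1 + pk (Step.D :: s) from rfl,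
        pk_cons_nonU _ _ (by intro hc; cases hc)]
    | succ a =>
      rw [List.replicate_succ, List.cons_append, pk_cons_U]
      have hh : ((List.replicate (a+1) Step.U ++ Step.D :: s).head?) = some Step.U := by
        rw [List.replicate_succ]; rfl
      rw [hh, ih (by omega)]
      simp

lemma word_pyramid (w : List Step) (hF : ∀ x ∈ w, x ≠ Step.F)
    (hpre : ∀ u, u <+: w → 0 ≤ (u.map stepVal).sum)
    (hsum : (w.map stepVal).sum = 0) (hpk : pk w = 1) :
    ∃ b, 1 ≤ b ∧ w = List.replicate b Step.U ++ List.replicate b Step.D := by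
  obtain ⟨a, s, rfl, hs⟩ := peel_U w
  have ha : 1 ≤ a := by
    rcases Nat.eq_zero_or_pos a with rfl | h
    · simp only [List.replicate_zero, List.nil_append] at *
      cases s with
      | nil => simp [pk] at hpk
      | cons y t =>
        cases y with
        | U => simp at hs
        | F => exact absurd rfl (hF Step.F List.mem_cons_self)
        | D =>
          have := hpre [Step.D] (List.cons_prefix_cons.2 ⟨rfl, List.nil_prefix⟩)
          simp [stepVal] at this
    · exact h
  cases s with
  | nil =>
    simp only [List.append_nil] at hsum
    rw [sum_repU] at hsum
    omega
  | cons y s' =>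
    have hy : y = Step.D := by
      cases y with
      | U => simp at hs
      | F => exact absurd rfl (hF Step.F (by simp))
      | D => rfl
    subst hy
    rw [pk_repU_cons_D a ha] at hpk
    have hpk' : pk s' = 0 := by omega
    have hFs' : ∀ x ∈ s', x ≠ Step.F := fun x hx => hF x (by simp [hx])
    obtain ⟨j, i, rfl⟩ := pk_zero_struct s' hFs' hpk'
    have hw : List.replicate a Step.U ++ Step.D :: (List.replicate j Step.D ++ List.replicate i Step.U)
        = (List.replicate a Step.U ++ List.replicate (j+1) Step.D) ++ List.replicate i Step.U := by
      rw [List.replicate_succ]; simp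
    have hpre2 := hpre (List.replicate a Step.U ++ List.replicate (j+1) Step.D)
      (by rw [hw]; exact List.prefix_append _ _)
    rw [List.map_append, List.sum_append, sum_repU, sum_repD] at hpre2
    rw [hw, List.map_append, List.sum_append, List.map_append, List.sum_append,
      sum_repU, sum_repD, sum_repU] at hsum
    have hi : i = 0 := by omega
    have haj : a = j + 1 := by omega
    subst hi
    refine ⟨a, ha, ?_⟩
    rw [hw, haj]
    simp

lemma char_iff (p : List Step) :
    (IsMotzkin p ∧ plt p = 1) ↔
      ∃ b, 1 ≤ b ∧ flt p = List.replicate b Step.U ++ List.replicate b Step.D := by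
  constructor
  · rintro ⟨hm, hp⟩
    rw [isMotzkin_iff] at hm
    apply word_pyramid
    · intro x hx
      have := (List.mem_filter.1 hx).2
      intro hc; subst hc; simp [noF] at this
    · intro u hu
      obtain ⟨q, hq, rfl⟩ := prefix_flt_lift p u hu
      rw [sum_flt]
      exact hm.2 q hq
    · rw [sum_flt]; exact hm.1
    · rw [← pltS_eq_pk, ← plt_eq_pltS]; exact hp
  · rintro ⟨b, hb, hflt⟩
    refine ⟨?_, ?_⟩
    · rw [isMotzkin_iff]
      constructor
      · rw [← sum_flt, hflt, List.map_append, List.sum_append, sum_repU, sum_repD]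
        ring
      · intro q hq
        rw [← sum_flt]
        exact sum_rep_prefix b _ (hflt ▸ List.IsPrefix.filter noF hq)
    · rw [plt_eq_pltS, pltS_eq_pk, hflt]
      exact pk_repU_repD b hb b hb

def unsh : List Bool → List Step → List Step
  | [], _ => []
  | false :: m, w => Step.F :: unsh m w
  | true :: _, [] => []
  | true :: m, x :: w => x :: unsh m w

lemma unsh_self (p : List Step) : unsh (p.map noF) (flt p) = p := by
  induction p with
  | nil => rfl
  | cons x t ih =>
    cases x with
    | U => rw [show flt (Step.U :: t) = Step.U :: flt t from rfl]; simp [unsh, noF, ih]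
    | D => rw [show flt (Step.D :: t) = Step.D :: flt t from rfl]; simp [unsh, noF, ih]
    | F => rw [show flt (Step.F :: t) = flt t from rfl]; simp [unsh, noF, ih]

lemma map_noF_unsh : ∀ (m : List Bool) (w : List Step),
    m.count true ≤ w.length → (∀ x ∈ w, noF x = true) → (unsh m w).map noF = m
  | [], _, _, _ => rfl
  | false :: m, w, hc, hF => by
    simp only [unsh, List.map_cons]
    rw [map_noF_unsh m w (by simpa [List.count_cons] using hc) hF]
    rfl
  | true :: m, [], hc, _ => by simp [List.count_cons] at hc
  | true :: m, x :: w, hc, hF => by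
    simp only [unsh, List.map_cons]
    rw [map_noF_unsh m w (by simp [List.count_cons] at hc; omega)
      (fun y hy => hF y (List.mem_cons_of_mem _ hy)), hF x List.mem_cons_self]

lemma flt_unsh : ∀ (m : List Bool) (w : List Step),
    m.count true ≤ w.length → (∀ x ∈ w, noF x = true) →
    flt (unsh m w) = w.take (m.count true)
  | [], w, _, _ => by simp [unsh]
  | false :: m, w, hc, hF => by
    have : flt (unsh (false :: m) w) = flt (unsh m w) := by
      rw [show unsh (false :: m) w = Step.F :: unsh m w from rfl]
      rfl
    rw [this, flt_unsh m w (by simpa [List.count_cons] using hc) hF]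
    simp [List.count_cons]
  | true :: m, [], hc, _ => by simp [List.count_cons] at hc
  | true :: m, x :: w, hc, hF => by
    have hx := hF x List.mem_cons_self
    have : flt (unsh (true :: m) (x :: w)) = x :: flt (unsh m w) := by
      rw [show unsh (true :: m) (x :: w) = x :: unsh m w from rfl]
      simp [List.filter_cons, hx]
    rw [this, flt_unsh m w (by simp [List.count_cons] at hc; omega)
      (fun y hy => hF y (List.mem_cons_of_mem _ hy))]
    simp [List.count_cons]

lemma length_unsh : ∀ (m : List Bool) (w : List Step),
    m.count true ≤ w.length → (unsh m w).length = m.length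
  | [], _, _ => rfl
  | false :: m, w, hc => by
    rw [show unsh (false :: m) w = Step.F :: unsh m w from rfl]
    simp only [List.length_cons]
    rw [length_unsh m w (by simpa [List.count_cons] using hc)]
  | true :: m, [], hc => by simp [List.count_cons] at hc
  | true :: m, x :: w, hc => by
    rw [show unsh (true :: m) (x :: w) = x :: unsh m w from rfl]
    simp only [List.length_cons]
    rw [length_unsh m w (by simp [List.count_cons] at hc; omega)]

lemma count_map_noF (p : List Step) : (p.map noF).count true = (flt p).length := by
  induction p with
  | nil => rfl
  | cons x t ih =>
    cases x <;> simp [List.count_cons, List.filter_cons, noF, ih]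

lemma noF_rep (b : ℕ) :
    ∀ x ∈ List.replicate b Step.U ++ List.replicate b Step.D, noF x = true := by
  intro x hx
  rcases List.mem_append.1 hx with h | h <;>
    rw [List.eq_of_mem_replicate h] <;> rfl

def E1 (n : ℕ) :
    {p : List Step // p.length = n ∧
      ∃ b, 1 ≤ b ∧ flt p = List.replicate b Step.U ++ List.replicate b Step.D} ≃
    {m : List Bool // m.length = n ∧ Even (m.count true) ∧ m.count true ≠ 0} where
  toFun := fun ⟨p, hl, hb⟩ => ⟨p.map noF, by
    obtain ⟨b, hb1, hb2⟩ := hb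
    refine ⟨by simpa using hl, ?_, ?_⟩
    · rw [count_map_noF, hb2]
      simp only [List.length_append, List.length_replicate]
      exact ⟨b, by omega⟩
    · rw [count_map_noF, hb2]
      simp only [List.length_append, List.length_replicate]
      omega⟩
  invFun := fun ⟨m, hl, he, hne⟩ =>
    ⟨unsh m (List.replicate (m.count true / 2) Step.U ++
      List.replicate (m.count true / 2) Step.D), by
      set b := m.count true / 2 with hbdef
      have hcb : m.count true = 2 * b := by
        obtain ⟨r, hr⟩ := he; omega
      have hwl : (List.replicate b Step.U ++ List.replicate b Step.D).length
          = m.count true := by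
        simp only [List.length_append, List.length_replicate]; omega
      have hle : m.count true ≤ (List.replicate b Step.U ++ List.replicate b Step.D).length := hwl.ge
      refine ⟨by rw [length_unsh m _ hle, hl], b, by omega, ?_⟩
      rw [flt_unsh m _ hle (noF_rep b), ← hwl, List.take_length]⟩
  left_inv := by
    rintro ⟨p, hl, b, hb1, hb2⟩
    apply Subtype.ext
    show unsh (p.map noF) _ = p
    have hc : (p.map noF).count true = 2 * b := by
      rw [count_map_noF, hb2]
      simp only [List.length_append, List.length_replicate]; omega
    have : (p.map noF).count true / 2 = b := by omega
    rw [this, ← hb2, unsh_self]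
  right_inv := by
    rintro ⟨m, hl, he, hne⟩
    apply Subtype.ext
    show (unsh m _).map noF = m
    set b := m.count true / 2 with hbdef
    have hcb : m.count true = 2 * b := by
      obtain ⟨r, hr⟩ := he; omega
    have hle : m.count true ≤ (List.replicate b Step.U ++ List.replicate b Step.D).length := by
      simp only [List.length_append, List.length_replicate]; omega
    exact map_noF_unsh m _ hle (noF_rep b)

def E2 (n : ℕ) (hn : 1 ≤ n) :
    {m : List Bool // m.length = n ∧ Even (m.count true) ∧ m.count true ≠ 0} ≃
    {t : List Bool // t.length = n - 1 ∧ t.count true ≠ 0} where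
  toFun := fun ⟨m, hl, he, hne⟩ => ⟨m.tail, by
    cases m with
    | nil => simp at hl; omega
    | cons b t =>
      simp only [List.tail_cons]
      refine ⟨by simp at hl; omega, ?_⟩
      intro h0
      cases b <;> simp [List.count_cons, h0] at he hne <;> omega⟩
  invFun := fun ⟨t, hl, hne⟩ => ⟨(!decide (Even (t.count true))) :: t, by
    refine ⟨by simp; omega, ?_, ?_⟩
    · by_cases h : Even (t.count true) <;>
        simp [List.count_cons, h, Nat.even_add_one]
    · by_cases h : Even (t.count true) <;>
        simp [List.count_cons, h] <;> omega⟩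
  left_inv := by
    rintro ⟨m, hl, he, hne⟩
    apply Subtype.ext
    cases m with
    | nil => simp at hl; omega
    | cons b t =>
      show (!decide (Even (t.count true))) :: t = b :: t
      cases b with
      | true =>
        have he' : ¬ Even (List.count true t) := by
          rw [← Nat.even_add_one]
          simpa [List.count_cons] using he
        simp [he']
      | false =>
        have he' : Even (List.count true t) := by simpa [List.count_cons] using he
        simp [he']
  right_inv := by
    rintro ⟨t, hl, hne⟩
    apply Subtype.ext
    rfl

def E3 (k : ℕ) :
    {t : List Bool // t.length = k ∧ t.count true ≠ 0} ≃
    {v : Fin k → Bool // v ≠ fun _ => false} where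
  toFun := fun ⟨t, hl, hne⟩ => ⟨fun i => t.getD i false, by
    intro hv
    apply hne
    rw [List.count_eq_zero]
    intro hmem
    obtain ⟨j, hj, hjt⟩ := List.mem_iff_getElem.1 hmem
    have := congrFun hv ⟨j, by omega⟩
    simp only at this
    rw [List.getD_eq_getElem t false (by omega)] at this
    rw [hjt] at this
    cases this⟩
  invFun := fun ⟨v, hv⟩ => ⟨List.ofFn v, by
    refine ⟨by simp, ?_⟩
    rw [Ne, List.count_eq_zero]
    intro hmem
    apply hv
    funext i
    by_contra hvi
    have hvt : v i = true := by revert hvi; cases v i <;> simp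
    exact hmem (List.mem_ofFn.2 ⟨i, hvt⟩)⟩
  left_inv := by
    rintro ⟨t, hl, hne⟩
    apply Subtype.ext
    show List.ofFn (fun i => t.getD (↑i) false) = t
    apply List.ext_getElem
    · simp [hl]
    · intro i h1 h2
      rw [List.getElem_ofFn]
      exact List.getD_eq_getElem t false h2
  right_inv := by
    rintro ⟨v, hv⟩
    apply Subtype.ext
    funext i
    show (List.ofFn v).getD i false = v i
    rw [List.getD_eq_getElem _ false (by simp [i.2]), List.getElem_ofFn]

/-- The number of Motzkin paths of length n ≥ 1 with exactly one plateau is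
2^(n−1) − 1. -/
theorem motzkin_one_plateau (n : ℕ) (hn : 1 ≤ n) :
    Nat.card {p : List Step // p.length = n ∧ IsMotzkin p ∧ plt p = 1}
      = 2 ^ (n - 1) - 1 := by
  have e0 : {p : List Step // p.length = n ∧ IsMotzkin p ∧ plt p = 1} ≃
      {p : List Step // p.length = n ∧
        ∃ b, 1 ≤ b ∧ flt p = List.replicate b Step.U ++ List.replicate b Step.D} :=
    Equiv.subtypeEquivRight (fun p => by rw [and_congr_right_iff]; intro _; exact char_iff p)
  have e : {p : List Step // p.length = n ∧ IsMotzkin p ∧ plt p = 1} ≃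
      {v : Fin (n-1) → Bool // v ≠ fun _ => false} :=
    e0.trans ((E1 n).trans ((E2 n hn).trans (E3 (n-1))))
  rw [Nat.card_congr e, Nat.card_eq_fintype_card]
  have : Fintype.card {v : Fin (n-1) → Bool // v ≠ fun _ => false}
      = Fintype.card {v : Fin (n-1) → Bool // ¬ (v = fun _ => false)} := rfl
  rw [this, Fintype.card_subtype_compl, Fintype.card_subtype_eq, Fintype.card_fun]
  simp
end

section
/- The number of Motzkin paths of length n ≥ 3 with exactly two plateaus equals (n−3)·n·2^(n−6) (interpreted in the rationals; this is always a natural number for n ≥ 3). -/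
namespace MP
open List

def IsPlat (l : List Step) : Prop :=
  ∃ k t, l = Step.U :: (List.replicate k Step.F ++ Step.D :: t)

def headNF (l : List Step) : Option Step := (l.dropWhile (· == Step.F)).head?

lemma dropWhileF_replicate (k : ℕ) (t : List Step) :
    (List.replicate k Step.F ++ t).dropWhile (· == Step.F) = t.dropWhile (· == Step.F) := by
  induction k with
  | zero => simp
  | succ k ih => simpa [List.replicate_succ] using ih

def pltR : List Step → ℕ
  | [] => 0
  | Step.U :: l => (if headNF l = some Step.D then 1 else 0) + pltR l
  | _ :: l => pltR l

lemma isPlat_iff (l : List Step) :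
    IsPlat l ↔ l.head? = some Step.U ∧ headNF l.tail = some Step.D := by
  constructor
  · rintro ⟨k, t, rfl⟩
    refine ⟨rfl, ?_⟩
    simp only [List.tail_cons, headNF]
    rw [dropWhileF_replicate]
    rfl
  · rintro ⟨h1, h2⟩
    cases l with
    | nil => simp at h1
    | cons a l =>
      simp at h1; subst h1
      refine ⟨(l.takeWhile (· == Step.F)).length, (l.dropWhile (· == Step.F)).tail, ?_⟩
      simp only [List.tail_cons, headNF] at h2 ⊢
      have h3 : l.takeWhile (· == Step.F) = List.replicate (l.takeWhile (· == Step.F)).length Step.F := by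
        apply List.eq_replicate_of_mem
        intro b hb
        have := List.mem_takeWhile_imp hb
        simpa using this
      have h4 : l.dropWhile (· == Step.F) = Step.D :: (l.dropWhile (· == Step.F)).tail := by
        cases hd : l.dropWhile (· == Step.F) with
        | nil => rw [hd] at h2; simp at h2
        | cons b m => rw [hd] at h2; simp at h2; subst h2; rfl
      conv_lhs => rw [← List.takeWhile_append_dropWhile (p := (· == Step.F)) (l := l)]
      rw [← h3, ← h4]

lemma Qb_iff (p : List Step) (i : ℕ) :
    ((List.range p.length).any (fun k =>
      (Step.U :: (List.replicate k Step.F ++ [Step.D])).isPrefixOf (p.drop i)))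
      = true ↔ IsPlat (p.drop i) := by
  rw [List.any_eq_true]
  constructor
  · rintro ⟨k, _, hk⟩
    rw [List.isPrefixOf_iff_prefix] at hk
    obtain ⟨t, ht⟩ := hk
    exact ⟨k, t, by simpa using ht.symm⟩
  · rintro ⟨k, t, hkt⟩
    refine ⟨k, ?_, ?_⟩
    · rw [List.mem_range]
      have h1 : (p.drop i).length ≤ p.length := by
        simpa using List.length_drop_le i p
      have h2 : (p.drop i).length = k + 2 + t.length := by
        rw [hkt]; simp; omega
      omega
    · rw [List.isPrefixOf_iff_prefix, hkt]
      exact ⟨t, by simp⟩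

instance : DecidablePred IsPlat := fun l =>
  decidable_of_iff _ (isPlat_iff l).symm

lemma plt_eq_count (p : List Step) :
    plt p = (List.range p.length).countP (fun i => decide (IsPlat (p.drop i))) := by
  rw [plt, ← List.countP_eq_length_filter]
  apply List.countP_congr
  intro i hi
  rw [Qb_iff p i, decide_eq_true_eq]

lemma plt_cons (s : Step) (l : List Step) :
    plt (s :: l) = (if IsPlat (s :: l) then 1 else 0) + plt l := by
  rw [plt_eq_count, plt_eq_count]
  simp only [List.length_cons, List.range_succ_eq_map, List.countP_cons, List.countP_map]
  have hc : (List.range l.length).countP ((fun i => decide (IsPlat ((s :: l).drop i))) ∘ Nat.succ)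
      = (List.range l.length).countP (fun i => decide (IsPlat (l.drop i))) := by
    apply List.countP_congr
    intro i _
    simp only [Function.comp_apply, List.drop_succ_cons, decide_eq_true_eq]
  rw [hc]
  simp only [List.drop_zero]
  by_cases h : IsPlat (s :: l) <;> simp [h] <;> omega

lemma plt_eq_pltR (p : List Step) : plt p = pltR p := by
  induction p with
  | nil => rfl
  | cons s l ih =>
    rw [plt_cons, ih]
    cases s with
    | U => rw [pltR]
           congr 1
           by_cases h : headNF l = some Step.D
           · simp [isPlat_iff, h]
           · simp [isPlat_iff, h]
    | F => have hnp : ¬ IsPlat (Step.F :: l) := by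
             rw [isPlat_iff]; rintro ⟨h, -⟩; simp at h
           rw [if_neg hnp]; simp [pltR]
    | D => have hnp : ¬ IsPlat (Step.D :: l) := by
             rw [isPlat_iff]; rintro ⟨h, -⟩; simp at h
           rw [if_neg hnp]; simp [pltR]


/-- erase flats -/
def ffilter (p : List Step) : List Step := p.filter (· != Step.F)

lemma ffilter_cons_F (l : List Step) : ffilter (Step.F :: l) = ffilter l := by
  simp [ffilter]

lemma ffilter_cons_ne (s : Step) (l : List Step) (h : s ≠ Step.F) :
    ffilter (s :: l) = s :: ffilter l := by
  simp [ffilter, h]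

lemma headNF_eq (l : List Step) : headNF l = (ffilter l).head? := by
  induction l with
  | nil => rfl
  | cons s l ih =>
    cases s with
    | U => simp [headNF, ffilter]
    | D => simp [headNF, ffilter]
    | F => rw [ffilter_cons_F, ← ih]; simp [headNF]

lemma ffilter_idem (l : List Step) : ffilter (ffilter l) = ffilter l := by
  simp [ffilter, List.filter_filter]

lemma pltR_ffilter (p : List Step) : pltR (ffilter p) = pltR p := by
  induction p with
  | nil => rfl
  | cons s l ih =>
    cases s with
    | F => rw [ffilter_cons_F, ih]; simp [pltR]
    | U =>
      rw [ffilter_cons_ne _ _ (by simp)]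
      show (if headNF (ffilter l) = some Step.D then 1 else 0) + pltR (ffilter l)
        = (if headNF l = some Step.D then 1 else 0) + pltR l
      rw [ih, headNF_eq, headNF_eq, ffilter_idem]
    | D =>
      rw [ffilter_cons_ne _ _ (by simp)]
      show pltR (ffilter l) = pltR l
      exact ih

lemma sum_stepVal_filter (l : List Step) :
    ((ffilter l).map stepVal).sum = (l.map stepVal).sum := by
  induction l with
  | nil => rfl
  | cons s l ih =>
    cases s with
    | F => rw [ffilter_cons_F, ih]; simp [stepVal]
    | U => rw [ffilter_cons_ne _ _ (by simp)]; simp [ih]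
    | D => rw [ffilter_cons_ne _ _ (by simp)]; simp [ih]

lemma ht_append (x y : List Step) (i : ℕ) :
    ht (x ++ y) i = ht x i + ht y (i - x.length) := by
  unfold ht
  rw [List.take_append, List.map_append, List.sum_append]

lemma ht_replicate_U (a i : ℕ) : ht (List.replicate a Step.U) i = min i a := by
  unfold ht
  rw [List.take_replicate, List.map_replicate]
  simp [stepVal]

lemma ht_replicate_D (a i : ℕ) : ht (List.replicate a Step.D) i = -((min i a : ℕ) : ℤ) := by
  unfold ht
  rw [List.take_replicate, List.map_replicate]
  simp [stepVal]

lemma ht_nil (i : ℕ) : ht [] i = 0 := by simp [ht]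

lemma length_ffilter_le (p : List Step) : (ffilter p).length ≤ p.length :=
  List.length_filter_le _ _

lemma ht_eq_ht_ffilter (p : List Step) (i : ℕ) :
    ht p i = ht (ffilter p) ((ffilter (p.take i)).length) := by
  have hpre : ffilter (p.take i) <+: ffilter p :=
    List.IsPrefix.filter _ (List.take_prefix i p)
  have heq : ffilter (p.take i) = (ffilter p).take (ffilter (p.take i)).length := by
    exact List.prefix_iff_eq_take.mp hpre
  unfold ht
  rw [← sum_stepVal_filter (p.take i)]
  conv_rhs => rw [← heq]

lemma exists_take_ffilter (p : List Step) (j : ℕ) (hj : j ≤ (ffilter p).length) :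
    ∃ i ≤ p.length, ffilter (p.take i) = (ffilter p).take j := by
  induction p generalizing j with
  | nil =>
    simp [ffilter] at hj
    exact ⟨0, le_rfl, by simp [hj, ffilter]⟩
  | cons s l ih =>
    by_cases hs : s = Step.F
    · subst hs
      rw [ffilter_cons_F] at hj
      obtain ⟨i, hi, h⟩ := ih j hj
      exact ⟨i + 1, by simpa using hi, by rw [List.take_succ_cons, ffilter_cons_F, h,
        ffilter_cons_F]⟩
    · rw [ffilter_cons_ne _ _ hs] at hj ⊢
      cases j with
      | zero => exact ⟨0, by simp, by simp [ffilter]⟩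
      | succ j =>
        obtain ⟨i, hi, h⟩ := ih j (by simpa using hj)
        exact ⟨i + 1, by simpa using hi,
          by rw [List.take_succ_cons, ffilter_cons_ne _ _ hs, h, List.take_succ_cons]⟩

lemma ffilter_take_length (p : List Step) : ffilter (p.take p.length) = ffilter p := by
  rw [List.take_length]

lemma isMotzkin_iff_ffilter (p : List Step) : IsMotzkin p ↔ IsMotzkin (ffilter p) := by
  have htot : ht p p.length = ht (ffilter p) (ffilter p).length := by
    rw [ht_eq_ht_ffilter p p.length, ffilter_take_length]
  constructor
  · rintro ⟨h0, hpos⟩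
    refine ⟨by rw [← htot]; exact h0, ?_⟩
    intro j hj
    obtain ⟨i, hi, heq⟩ := exists_take_ffilter p j hj
    have : ht p i = ht (ffilter p) j := by
      rw [ht_eq_ht_ffilter p i, heq, List.length_take, min_eq_left hj]
    rw [← this]
    exact hpos i hi
  · rintro ⟨h0, hpos⟩
    refine ⟨by rw [htot]; exact h0, ?_⟩
    intro i hi
    rw [ht_eq_ht_ffilter p i]
    apply hpos
    exact (List.IsPrefix.filter _ (List.take_prefix i p)).length_le


def word (m a1 b1 : ℕ) : List Step :=
  List.replicate a1 Step.U ++ (List.replicate b1 Step.D ++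
    (List.replicate (m - a1) Step.U ++ List.replicate (m - b1) Step.D))

def NF (q : List Step) : Prop :=
  ∃ m a1 b1, 1 ≤ b1 ∧ b1 ≤ a1 ∧ a1 + 1 ≤ m ∧ q = word m a1 b1

lemma headNF_noF (s : List Step) (h : Step.F ∉ s) : headNF s = s.head? := by
  cases s with
  | nil => rfl
  | cons a t =>
    have : a ≠ Step.F := fun hh => h (by simp [hh])
    rw [headNF, List.dropWhile_cons_of_neg (by simpa using this)]

lemma pltR_cons_D (l : List Step) : pltR (Step.D :: l) = pltR l := by simp [pltR]

lemma pltR_cons_U (l : List Step) :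
    pltR (Step.U :: l) = (if headNF l = some Step.D then 1 else 0) + pltR l := rfl

lemma pltR_replicate_D_append (b : ℕ) (s : List Step) :
    pltR (List.replicate b Step.D ++ s) = pltR s := by
  induction b with
  | zero => simp
  | succ b ih => rw [List.replicate_succ, List.cons_append, pltR_cons_D, ih]

lemma headNF_cons_U (l : List Step) : headNF (Step.U :: l) = some Step.U := by
  rw [headNF, List.dropWhile_cons_of_neg (by simp)]; rfl

lemma headNF_of_head?_D (x : List Step) (hx : x.head? = some Step.D) :
    headNF x = some Step.D := by
  cases x with
  | nil => simp at hx
  | cons a t =>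
    simp only [List.head?_cons, Option.some.injEq] at hx
    subst hx
    rw [headNF, List.dropWhile_cons_of_neg (by simp)]; rfl

lemma pltR_replicate_U_append (a : ℕ) (ha : 1 ≤ a) (x : List Step)
    (hx : x.head? = some Step.D) :
    pltR (List.replicate a Step.U ++ x) = 1 + pltR x := by
  induction a with
  | zero => omega
  | succ a ih =>
    rw [List.replicate_succ, List.cons_append, pltR_cons_U]
    cases a with
    | zero =>
      simp only [List.replicate_zero, List.nil_append]
      rw [if_pos (headNF_of_head?_D x hx)]
    | succ a =>
      have h1 : headNF (List.replicate (a + 1) Step.U ++ x) = some Step.U := by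
        rw [List.replicate_succ, List.cons_append, headNF_cons_U]
      rw [if_neg (by rw [h1]; simp), ih (by omega)]
      omega

lemma pltR_replicate_U_append_ne (c : ℕ) (s : List Step) (hF : Step.F ∉ s)
    (hs : s.head? ≠ some Step.D) :
    pltR (List.replicate c Step.U ++ s) = pltR s := by
  induction c with
  | zero => simp
  | succ c ih =>
    rw [List.replicate_succ, List.cons_append, pltR_cons_U]
    cases c with
    | zero =>
      simp only [List.replicate_zero, List.nil_append]
      rw [if_neg (by rw [headNF_noF s hF]; exact hs)]
      omega
    | succ c =>
      have h1 : headNF (List.replicate (c + 1) Step.U ++ s) = some Step.U := by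
        rw [List.replicate_succ, List.cons_append, headNF_cons_U]
      rw [if_neg (by rw [h1]; simp), ih]
      omega


lemma ht_UD_split (a b : ℕ) (s : List Step) (i : ℕ) :
    ht (List.replicate a Step.U ++ (List.replicate b Step.D ++ s)) i
      = ((min i a : ℕ) : ℤ) - ((min (i - a) b : ℕ) : ℤ) + ht s (i - a - b) := by
  rw [ht_append, ht_append, ht_replicate_U, ht_replicate_D, List.length_replicate,
    List.length_replicate]
  ring_nf

lemma ht_U_split (c : ℕ) (s : List Step) (i : ℕ) :
    ht (List.replicate c Step.U ++ s) i = ((min i c : ℕ) : ℤ) + ht s (i - c) := by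
  rw [ht_append, ht_replicate_U, List.length_replicate]

lemma ht_zero (s : List Step) : ht s 0 = 0 := by simp [ht]

lemma head?_dropWhile_ne (p : Step → Bool) (l : List Step) (x : Step)
    (h : (l.dropWhile p).head? = some x) : p x = false := by
  have := List.head?_dropWhile_not p l
  rw [h] at this
  exact this

lemma head?_replicate_append (b : ℕ) (x : Step) (s : List Step) (hb : 1 ≤ b) :
    (List.replicate b x ++ s).head? = some x := by
  cases b with
  | zero => omega
  | succ b => rw [List.replicate_succ]; rfl

lemma peel (q : List Step) (hF : Step.F ∉ q) (hM : IsMotzkin q) (hne : q ≠ []) :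
    ∃ a b s, 1 ≤ a ∧ 1 ≤ b ∧ b ≤ a ∧ Step.F ∉ s ∧ s.head? ≠ some Step.D ∧
      q = List.replicate a Step.U ++ (List.replicate b Step.D ++ s) ∧
      pltR q = 1 + pltR s ∧ IsMotzkin (List.replicate (a - b) Step.U ++ s) := by
  classical
  -- first letter is U
  obtain ⟨c, t, rfl⟩ : ∃ c t, q = c :: t := by
    cases q with
    | nil => exact absurd rfl hne
    | cons c t => exact ⟨c, t, rfl⟩
  have hc : c = Step.U := by
    have h1 := hM.2 1 (by simp)
    have h2 : ht (c :: t) 1 = stepVal c := by simp [ht]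
    rw [h2] at h1
    cases c with
    | U => rfl
    | F => exact absurd List.mem_cons_self hF
    | D => simp [stepVal] at h1
  subst hc
  set q : List Step := Step.U :: t with hqdef
  set a : ℕ := (q.takeWhile (· == Step.U)).length with hadef
  set r : List Step := q.dropWhile (· == Step.U) with hrdef
  have hA : q.takeWhile (· == Step.U) = List.replicate a Step.U :=
    List.eq_replicate_of_mem (fun b hb => by simpa using List.mem_takeWhile_imp hb)
  have hqar : q = List.replicate a Step.U ++ r := by
    conv_lhs => rw [← List.takeWhile_append_dropWhile (p := (· == Step.U)) (l := q)]
    rw [hA]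
  have ha : 1 ≤ a := by
    rw [hadef, hqdef, List.takeWhile_cons_of_pos (by simp)]
    simp
  have hrne : r ≠ [] := by
    intro h
    rw [h, List.append_nil] at hqar
    have h1 := hM.1
    rw [hqar, ht_replicate_U, List.length_replicate] at h1
    simp at h1
    have : q = [] := by rw [hqar, h1]; rfl
    exact hne this
  obtain ⟨d, r', hdr⟩ : ∃ d r', r = d :: r' := by
    cases hr : r with
    | nil => exact absurd hr hrne
    | cons d r' => exact ⟨d, r', rfl⟩
  have hd : d = Step.D := by
    have h1 : (d == Step.U) = false := by
      apply head?_dropWhile_ne (· == Step.U) q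
      rw [← hrdef, hdr]; rfl
    have h2 : d ∈ q := (List.dropWhile_suffix _).subset (by rw [← hrdef, hdr]; simp)
    cases d with
    | U => simp at h1
    | F => exact absurd h2 hF
    | D => rfl
  subst hd
  set b : ℕ := (r.takeWhile (· == Step.D)).length with hbdef
  set s : List Step := r.dropWhile (· == Step.D) with hsdef
  have hB : r.takeWhile (· == Step.D) = List.replicate b Step.D :=
    List.eq_replicate_of_mem (fun x hx => by simpa using List.mem_takeWhile_imp hx)
  have hrbs : r = List.replicate b Step.D ++ s := by
    conv_lhs => rw [← List.takeWhile_append_dropWhile (p := (· == Step.D)) (l := r)]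
    rw [hB]
  have hb : 1 ≤ b := by
    rw [hbdef, hdr, List.takeWhile_cons_of_pos (by simp)]
    simp
  have hsF : Step.F ∉ s := by
    intro h
    exact hF ((List.dropWhile_suffix (· == Step.U)).subset
      ((List.dropWhile_suffix (· == Step.D)).subset h))
  have hshead : s.head? ≠ some Step.D := by
    intro h
    have := head?_dropWhile_ne (· == Step.D) r Step.D (by rw [← hsdef]; exact h)
    simp at this
  have hq : q = List.replicate a Step.U ++ (List.replicate b Step.D ++ s) := by
    rw [hqar, hrbs]
  have hlen : q.length = a + b + s.length := by
    rw [hq]; simp; omega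
  have hhti : ∀ i, ht q i = ((min i a : ℕ) : ℤ) - ((min (i - a) b : ℕ) : ℤ) + ht s (i - a - b) := by
    intro i
    conv_lhs => rw [hq]
    exact ht_UD_split a b s i
  -- total height of s
  have hts : ht s s.length = (b : ℤ) - (a : ℤ) := by
    have h1 := hM.1
    rw [hhti q.length, hlen] at h1
    have e1 : a + b + s.length - a - b = s.length := by omega
    rw [e1] at h1
    omega
  have hba : b ≤ a := by
    have h1 := hM.2 (a + b) (by omega)
    rw [hhti (a + b)] at h1
    have e1 : a + b - a - b = 0 := by omega
    rw [e1, ht_zero] at h1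
    omega
  refine ⟨a, b, s, ha, hb, hba, hsF, hshead, hq, ?_, ?_⟩
  · rw [hq, pltR_replicate_U_append a ha _ (head?_replicate_append b Step.D s hb),
      pltR_replicate_D_append]
  · constructor
    · rw [ht_U_split, List.length_append, List.length_replicate]
      have e1 : (a - b) + s.length - (a - b) = s.length := by omega
      rw [e1, hts]
      omega
    · intro i hi
      rw [List.length_append, List.length_replicate] at hi
      rw [ht_U_split]
      by_cases hib : i ≤ a - b
      · have e1 : i - (a - b) = 0 := by omega
        rw [e1, ht_zero]
        omega
      · have h1 := hM.2 (a + b + (i - (a - b))) (by omega)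
        rw [hhti] at h1
        have e1 : a + b + (i - (a - b)) - a - b = i - (a - b) := by omega
        rw [e1] at h1
        omega


lemma noF_replicate_U_append (c : ℕ) (s : List Step) (hsF : Step.F ∉ s) :
    Step.F ∉ List.replicate c Step.U ++ s := by
  intro hmem
  rcases List.mem_append.mp hmem with h | h
  · exact Step.noConfusion (List.eq_of_mem_replicate h)
  · exact hsF h

lemma S0 (q : List Step) (hF : Step.F ∉ q) (hM : IsMotzkin q) (h : pltR q = 0) :
    q = [] := by
  by_contra hne
  obtain ⟨a, b, s, ha, hb, hba, hsF, hsh, hq, hplt, hM'⟩ := peel q hF hM hne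
  omega

lemma S1 (q : List Step) (hF : Step.F ∉ q) (hM : IsMotzkin q) (h : pltR q = 1) :
    ∃ a, 1 ≤ a ∧ q = List.replicate a Step.U ++ List.replicate a Step.D := by
  have hne : q ≠ [] := by rintro rfl; simp [pltR] at h
  obtain ⟨a, b, s, ha, hb, hba, hsF, hsh, hq, hplt, hM'⟩ := peel q hF hM hne
  have hs0 : pltR s = 0 := by omega
  have h0 : pltR (List.replicate (a - b) Step.U ++ s) = 0 := by
    rw [pltR_replicate_U_append_ne _ s hsF hsh]; exact hs0
  have hnil := S0 _ (noF_replicate_U_append _ s hsF) hM' h0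
  obtain ⟨h1, h2⟩ := List.append_eq_nil_iff.mp hnil
  have hab : a = b := by
    have := congrArg List.length h1
    simp at this
    omega
  refine ⟨a, ha, ?_⟩
  rw [hq, h2, hab]
  simp

lemma S2 (q : List Step) (hF : Step.F ∉ q) (hM : IsMotzkin q) (h : pltR q = 2) :
    NF q := by
  have hne : q ≠ [] := by rintro rfl; simp [pltR] at h
  obtain ⟨a, b, s, ha, hb, hba, hsF, hsh, hq, hplt, hM'⟩ := peel q hF hM hne
  have h1 : pltR (List.replicate (a - b) Step.U ++ s) = 1 := by
    rw [pltR_replicate_U_append_ne _ s hsF hsh]; omega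
  obtain ⟨a', ha', heq⟩ := S1 _ (noF_replicate_U_append _ s hsF) hM' h1
  have hc : a - b ≤ a' := by
    by_contra hlt
    push_neg at hlt
    have hg := congrArg (fun l => l[a']?) heq
    rw [List.getElem?_append_left (by simp; omega),
      List.getElem?_append_right (by simp), List.getElem?_replicate,
      List.getElem?_replicate] at hg
    rw [if_pos hlt, if_pos (by simp; omega)] at hg
    exact Step.noConfusion (Option.some.inj hg)
  have hs : s = List.replicate (a' - (a - b)) Step.U ++ List.replicate a' Step.D := by
    have hg := congrArg (List.drop (a - b)) heq
    rw [List.drop_left' (by simp)] at hg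
    rw [List.drop_append, List.drop_replicate, List.drop_replicate] at hg
    rw [hg]
    congr 1
    have e : a - b - (List.replicate a' Step.U).length = 0 := by simp; omega
    rw [e, Nat.sub_zero]
  have hlt : a - b < a' := by
    rcases Nat.lt_or_ge (a - b) a' with h' | h'
    · exact h'
    · exfalso
      have he : a - b = a' := by omega
      rw [← he] at hs
      simp at hs
      apply hsh
      rw [hs]
      have h2 := head?_replicate_append (a - b) Step.D [] (by omega)
      rwa [List.append_nil] at h2
  refine ⟨b + a', a, b, hb, hba, by omega, ?_⟩
  rw [hq, hs]
  unfold word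
  have e1 : b + a' - a = a' - (a - b) := by omega
  have e2 : b + a' - b = a' := by omega
  rw [e1, e2]

lemma ht_word (m a1 b1 i : ℕ) :
    ht (word m a1 b1) i = ((min i a1 : ℕ) : ℤ) - ((min (i - a1) b1 : ℕ) : ℤ)
      + (((min (i - a1 - b1) (m - a1) : ℕ) : ℤ)
        - ((min (i - a1 - b1 - (m - a1)) (m - b1) : ℕ) : ℤ)) := by
  unfold word
  rw [ht_UD_split]
  congr 1
  rw [ht_append, ht_replicate_U, ht_replicate_D, List.length_replicate]
  rfl

lemma length_word (m a1 b1 : ℕ) :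
    (word m a1 b1).length = a1 + b1 + (m - a1) + (m - b1) := by
  unfold word
  simp
  omega

lemma NF_props (q : List Step) (h : NF q) :
    Step.F ∉ q ∧ IsMotzkin q ∧ pltR q = 2 := by
  obtain ⟨m, a1, b1, hb1, hba, ham, rfl⟩ := h
  have ha1 : 1 ≤ a1 := le_trans hb1 hba
  have ha2 : 1 ≤ m - a1 := by omega
  have hb2 : 1 ≤ m - b1 := by omega
  refine ⟨?_, ⟨?_, ?_⟩, ?_⟩
  · intro hmem
    unfold word at hmem
    simp only [List.mem_append, List.mem_replicate] at hmem
    rcases hmem with (⟨-, h'⟩ | ⟨-, h'⟩ | ⟨-, h'⟩ | ⟨-, h'⟩) <;> exact Step.noConfusion h'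
  · rw [ht_word, length_word]
    omega
  · intro i hi
    rw [ht_word]
    rw [length_word] at hi
    omega
  · unfold word
    have hx2 : (List.replicate (m - b1) Step.D).head? = some Step.D := by
      have h2 := head?_replicate_append (m - b1) Step.D [] hb2
      rwa [List.append_nil] at h2
    have hz : pltR (List.replicate (m - b1) Step.D) = 0 := by
      have h2 := pltR_replicate_D_append (m - b1) []
      rw [List.append_nil] at h2
      rw [h2]
      rfl
    rw [pltR_replicate_U_append a1 ha1 _ (head?_replicate_append _ _ _ hb1),
      pltR_replicate_D_append,
      pltR_replicate_U_append (m - a1) ha2 _ hx2, hz]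

lemma motzkin_plt_iff (p : List Step) :
    (IsMotzkin p ∧ plt p = 2) ↔ NF (ffilter p) := by
  have hF : Step.F ∉ ffilter p := by
    intro h
    have := List.of_mem_filter h
    simp at this
  constructor
  · rintro ⟨h1, h2⟩
    apply S2 _ hF ((isMotzkin_iff_ffilter p).mp h1)
    rw [pltR_ffilter, ← plt_eq_pltR]
    exact h2
  · intro h
    obtain ⟨-, hM, hplt⟩ := NF_props _ h
    refine ⟨(isMotzkin_iff_ffilter p).mpr hM, ?_⟩
    rw [plt_eq_pltR, ← pltR_ffilter]
    exact hplt


-- ## Counting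

instance finList (n : ℕ) (P : List Step → Prop) :
    Finite {p : List Step // p.length = n ∧ P p} := by
  have hfin : Finite (List.Vector Step n) := Finite.of_fintype _
  refine Finite.of_injective (β := List.Vector Step n)
    (fun x => ⟨x.1, x.2.1⟩) ?_
  rintro ⟨p, hp⟩ ⟨q, hq⟩ h
  have hpq : p = q := congrArg Subtype.val h
  exact Subtype.ext hpq

lemma N_zero (w : List Step) :
    Nat.card {p : List Step // p.length = 0 ∧ ffilter p = w}
      = if w = [] then 1 else 0 := by
  by_cases hw : w = []
  · subst hw
    rw [if_pos rfl]
    rw [Nat.card_eq_one_iff_unique]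
    constructor
    · constructor
      rintro ⟨p, h1, h2⟩ ⟨q, g1, g2⟩
      apply Subtype.ext
      simp only
      rw [List.length_eq_zero_iff.mp h1, List.length_eq_zero_iff.mp g1]
    · exact ⟨⟨[], rfl, rfl⟩⟩
  · rw [if_neg hw]
    have : IsEmpty {p : List Step // p.length = 0 ∧ ffilter p = w} := by
      constructor
      rintro ⟨p, h1, h2⟩
      rw [List.length_eq_zero_iff.mp h1] at h2
      exact hw (h2.symm ▸ rfl)
    exact Nat.card_of_isEmpty

lemma N_succ_nil (n : ℕ) :
    Nat.card {p : List Step // p.length = n + 1 ∧ ffilter p = []}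
      = Nat.card {p : List Step // p.length = n ∧ ffilter p = []} := by
  symm
  apply Nat.card_eq_of_bijective
    (fun x => ⟨Step.F :: x.1, by simp [x.2.1], by rw [ffilter_cons_F]; exact x.2.2⟩)
  constructor
  · rintro ⟨p, hp⟩ ⟨q, hq⟩ h
    simp only [Subtype.mk.injEq, List.cons.injEq, true_and] at h
    exact Subtype.ext h
  · rintro ⟨p, h1, h2⟩
    obtain ⟨a, t, rfl⟩ : ∃ a t, p = a :: t := by
      cases p with
      | nil => simp at h1
      | cons a t => exact ⟨a, t, rfl⟩
    have ha : a = Step.F := by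
      cases a with
      | F => rfl
      | U => rw [ffilter_cons_ne _ _ (by simp)] at h2; simp at h2
      | D => rw [ffilter_cons_ne _ _ (by simp)] at h2; simp at h2
    subst ha
    refine ⟨⟨t, by simpa using h1, by rwa [ffilter_cons_F] at h2⟩, rfl⟩

lemma N_succ_cons (n : ℕ) (c : Step) (w : List Step) (hc : c ≠ Step.F) :
    Nat.card {p : List Step // p.length = n + 1 ∧ ffilter p = c :: w}
      = Nat.card {p : List Step // p.length = n ∧ ffilter p = c :: w}
        + Nat.card {p : List Step // p.length = n ∧ ffilter p = w} := by
  rw [← Nat.card_sum]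
  symm
  apply Nat.card_eq_of_bijective (fun x => Sum.elim
    (fun y => (⟨Step.F :: y.1, by simp [y.2.1], by rw [ffilter_cons_F]; exact y.2.2⟩ :
      {p : List Step // p.length = n + 1 ∧ ffilter p = c :: w}))
    (fun y => ⟨c :: y.1, by simp [y.2.1], by rw [ffilter_cons_ne _ _ hc, y.2.2]⟩) x)
  constructor
  · rintro (⟨p, hp⟩ | ⟨p, hp⟩) (⟨q, hq⟩ | ⟨q, hq⟩) h <;>
      simp only [Sum.elim_inl, Sum.elim_inr, Subtype.mk.injEq, List.cons.injEq] at h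
    · exact congrArg Sum.inl (Subtype.ext h.2)
    · exact absurd h.1.symm hc
    · exact absurd h.1 hc
    · exact congrArg Sum.inr (Subtype.ext h.2)
  · rintro ⟨p, h1, h2⟩
    obtain ⟨a, t, rfl⟩ : ∃ a t, p = a :: t := by
      cases p with
      | nil => simp at h1
      | cons a t => exact ⟨a, t, rfl⟩
    by_cases ha : a = Step.F
    · subst ha
      exact ⟨Sum.inl ⟨t, by simpa using h1, by rwa [ffilter_cons_F] at h2⟩, rfl⟩
    · rw [ffilter_cons_ne _ _ ha] at h2
      obtain ⟨hac, hft⟩ : a = c ∧ ffilter t = w := by simpa using h2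
      subst hac
      exact ⟨Sum.inr ⟨t, by simpa using h1, hft⟩, rfl⟩

lemma N_eq_choose (n : ℕ) (w : List Step) (hw : Step.F ∉ w) :
    Nat.card {p : List Step // p.length = n ∧ ffilter p = w} = n.choose w.length := by
  induction n generalizing w with
  | zero =>
    rw [N_zero]
    by_cases h : w = []
    · subst h; simp
    · rw [if_neg h, Nat.choose_eq_zero_of_lt]
      simpa using List.length_pos_iff.mpr h
  | succ n ih =>
    cases w with
    | nil => rw [N_succ_nil, ih [] (by simp)]; simp
    | cons c w' =>
      have hc : c ≠ Step.F := fun h => hw (by simp [h])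
      rw [N_succ_cons n c w' hc, ih _ (fun h => hw (by simp [h])),
        ih _ (fun h => hw (List.mem_cons_of_mem c h))]
      have := Nat.choose_succ_succ n w'.length
      simp only [List.length_cons, Nat.succ_eq_add_one] at this ⊢
      omega


lemma tw_dw (p : Step → Bool) (x : Step) (hx : p x = true) (a : ℕ) (s : List Step)
    (hs : ∀ z, s.head? = some z → p z = false) :
    (List.replicate a x ++ s).takeWhile p = List.replicate a x ∧
    (List.replicate a x ++ s).dropWhile p = s := by
  induction a with
  | zero =>
    simp only [List.replicate_zero, List.nil_append]
    cases s with
    | nil => simp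
    | cons z t =>
      rw [List.takeWhile_cons_of_neg (by simp [hs z rfl]),
        List.dropWhile_cons_of_neg (by simp [hs z rfl])]
      exact ⟨rfl, rfl⟩
  | succ a ih =>
    rw [List.replicate_succ, List.cons_append, List.takeWhile_cons_of_pos hx,
      List.dropWhile_cons_of_pos hx, ih.1]
    exact ⟨(List.replicate_succ (a := x) (n := a)).symm, ih.2⟩

def extT (q : List Step) : ℕ × ℕ × ℕ :=
  (q.length / 2, (q.takeWhile (· == Step.U)).length,
    ((q.dropWhile (· == Step.U)).takeWhile (· == Step.D)).length)

lemma extT_word (m a1 b1 : ℕ) (hb1 : 1 ≤ b1) (hba : b1 ≤ a1) (ham : a1 + 1 ≤ m) :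
    extT (word m a1 b1) = (m, a1, b1) := by
  have hd1 : ∀ z : Step, (List.replicate b1 Step.D ++
      (List.replicate (m - a1) Step.U ++ List.replicate (m - b1) Step.D)).head? = some z →
      (z == Step.U) = false := by
    intro z hz
    rw [head?_replicate_append _ _ _ hb1] at hz
    cases Option.some.inj hz
    rfl
  have hd2 : ∀ z : Step, (List.replicate (m - a1) Step.U ++
      List.replicate (m - b1) Step.D).head? = some z → (z == Step.D) = false := by
    intro z hz
    rw [head?_replicate_append _ _ _ (by omega)] at hz
    cases Option.some.inj hz
    rfl
  have h1 := tw_dw (· == Step.U) Step.U (by simp) a1 _ hd1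
  have h2 := tw_dw (· == Step.D) Step.D (by simp) b1 _ hd2
  show ((word m a1 b1).length / 2, _, _) = (m, a1, b1)
  rw [length_word]
  unfold word
  rw [h1.1, h1.2, h2.1]
  simp only [List.length_replicate, Prod.mk.injEq]
  exact ⟨by omega, trivial⟩

lemma noF_word (m a1 b1 : ℕ) : Step.F ∉ word m a1 b1 := by
  intro hmem
  unfold word at hmem
  simp only [List.mem_append, List.mem_replicate] at hmem
  rcases hmem with (⟨-, h'⟩ | ⟨-, h'⟩ | ⟨-, h'⟩ | ⟨-, h'⟩) <;> exact Step.noConfusion h'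

def T (n : ℕ) : Finset (ℕ × ℕ × ℕ) :=
  ((Finset.range (n+1)) ×ˢ ((Finset.range (n+1)) ×ˢ (Finset.range (n+1)))).filter
    (fun t => 1 ≤ t.2.2 ∧ t.2.2 ≤ t.2.1 ∧ t.2.1 + 1 ≤ t.1)

lemma mem_T (n : ℕ) (t : ℕ × ℕ × ℕ) :
    t ∈ T n ↔ (t.1 < n + 1 ∧ t.2.1 < n + 1 ∧ t.2.2 < n + 1)
      ∧ (1 ≤ t.2.2 ∧ t.2.2 ≤ t.2.1 ∧ t.2.1 + 1 ≤ t.1) := by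
  simp [T, Finset.mem_filter, Finset.mem_product, and_assoc]

lemma nat_card_sigma_finset {α : Type*} (s : Finset α) (F : α → Type*)
    [∀ a, Finite (F a)] :
    Nat.card (Σ t : s, F t) = ∑ a ∈ s, Nat.card (F a) := by
  classical
  letI : ∀ t : s, Fintype (F t) := fun t => Fintype.ofFinite _
  rw [Nat.card_eq_fintype_card, Fintype.card_sigma,
    ← Finset.sum_coe_sort s (fun a => Nat.card (F a))]
  exact Finset.sum_congr rfl (fun t _ => (Nat.card_eq_fintype_card).symm)

lemma card_main (n : ℕ) :
    Nat.card {p : List Step // p.length = n ∧ IsMotzkin p ∧ plt p = 2}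
      = ∑ t ∈ T n, n.choose (2 * t.1) := by
  classical
  have e1 : Nat.card {p : List Step // p.length = n ∧ IsMotzkin p ∧ plt p = 2}
      = Nat.card {p : List Step // p.length = n ∧ NF (ffilter p)} :=
    Nat.card_congr (Equiv.subtypeEquivRight (fun p =>
      and_congr_right (fun _ => motzkin_plt_iff p)))
  rw [e1]
  have e2 : Nat.card (Σ t : (T n),
        {p : List Step // p.length = n ∧ ffilter p = word t.1.1 t.1.2.1 t.1.2.2})
      = Nat.card {p : List Step // p.length = n ∧ NF (ffilter p)} := by
    apply Nat.card_eq_of_bijective (fun x => ⟨x.2.1, x.2.2.1, by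
      have hm := (mem_T n x.1.1).mp x.1.2
      exact ⟨x.1.1.1, x.1.1.2.1, x.1.1.2.2, hm.2.1, hm.2.2.1, hm.2.2.2, x.2.2.2⟩⟩)
    constructor
    · rintro ⟨⟨t, ht⟩, ⟨p, hp1, hp2⟩⟩ ⟨⟨t', ht'⟩, ⟨p', hp1', hp2'⟩⟩ h
      have hpp : p = p' := congrArg Subtype.val h
      subst hpp
      have htt : t = t' := by
        obtain ⟨m, a1, b1⟩ := t
        obtain ⟨m', a1', b1'⟩ := t'
        have hm := (mem_T n _).mp ht
        have hm' := (mem_T n _).mp ht'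
        simp only at hm hm' hp2 hp2'
        calc (m, a1, b1) = extT (word m a1 b1) :=
              (extT_word m a1 b1 hm.2.1 hm.2.2.1 hm.2.2.2).symm
          _ = extT (word m' a1' b1') := by rw [← hp2, ← hp2']
          _ = (m', a1', b1') := extT_word m' a1' b1' hm'.2.1 hm'.2.2.1 hm'.2.2.2
      subst htt
      rfl
    · rintro ⟨p, hp1, m, a1, b1, hb, hba, ham, hw⟩
      have hlen : 2 * m ≤ n := by
        have h1 : (ffilter p).length ≤ p.length := length_ffilter_le p
        rw [hw, length_word] at h1
        omega
      have hT : (m, a1, b1) ∈ T n := by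
        rw [mem_T]
        dsimp only
        omega
      exact ⟨⟨⟨(m, a1, b1), hT⟩, ⟨p, hp1, hw⟩⟩, rfl⟩
  rw [← e2, nat_card_sigma_finset (T n)
    (fun a => {p : List Step // p.length = n ∧ ffilter p = word a.1 a.2.1 a.2.2})]
  apply Finset.sum_congr rfl
  intro t htT
  obtain ⟨m, a1, b1⟩ := t
  have hm := (mem_T n _).mp htT
  dsimp only at hm ⊢
  rw [N_eq_choose n _ (noF_word m a1 b1), length_word]
  congr 1
  omega


lemma pairs_card (n m : ℕ) (hm : m ≤ n + 1) :
    (((Finset.range (n+1)) ×ˢ (Finset.range (n+1))).filter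
      (fun y : ℕ × ℕ => 1 ≤ y.2 ∧ y.2 ≤ y.1 ∧ y.1 + 1 ≤ m)).card = m.choose 2 := by
  classical
  rw [Finset.card_filter, Finset.sum_product]
  have hinner : ∀ a1 ∈ Finset.range (n+1),
      (∑ b1 ∈ Finset.range (n+1), if 1 ≤ b1 ∧ b1 ≤ a1 ∧ a1 + 1 ≤ m then 1 else 0)
        = if a1 + 1 ≤ m then a1 else 0 := by
    intro a1 ha1
    by_cases hc : a1 + 1 ≤ m
    · rw [if_pos hc]
      have e1 : (∑ b1 ∈ Finset.range (n+1), if 1 ≤ b1 ∧ b1 ≤ a1 ∧ a1 + 1 ≤ m then 1 else 0)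
          = ∑ b1 ∈ Finset.range (n+1), if b1 ∈ Finset.Icc 1 a1 then 1 else 0 := by
        apply Finset.sum_congr rfl
        intro b1 _
        congr 1
        simp only [Finset.mem_Icc, eq_iff_iff]
        constructor
        · rintro ⟨x, y, -⟩; exact ⟨x, y⟩
        · rintro ⟨x, y⟩; exact ⟨x, y, hc⟩
      rw [e1, Finset.sum_ite_mem]
      have e2 : Finset.range (n+1) ∩ Finset.Icc 1 a1 = Finset.Icc 1 a1 := by
        apply Finset.inter_eq_right.mpr
        intro b hb
        simp only [Finset.mem_Icc] at hb
        simp only [Finset.mem_range]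
        simp only [Finset.mem_range] at ha1
        omega
      rw [e2]
      simp [Nat.card_Icc]
    · rw [if_neg hc]
      apply Finset.sum_eq_zero
      intro b1 _
      rw [if_neg (by tauto)]
  rw [Finset.sum_congr rfl hinner]
  have e3 : (∑ a1 ∈ Finset.range (n+1), if a1 + 1 ≤ m then a1 else 0)
      = ∑ a1 ∈ Finset.range (n+1), if a1 ∈ Finset.range m then a1 else 0 := by
    apply Finset.sum_congr rfl
    intro a1 _
    congr 1
    simp only [Finset.mem_range, eq_iff_iff]
    omega
  rw [e3, Finset.sum_ite_mem]
  have e4 : Finset.range (n+1) ∩ Finset.range m = Finset.range m := by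
    apply Finset.inter_eq_right.mpr
    intro b hb
    simp only [Finset.mem_range] at hb ⊢
    omega
  rw [e4, Nat.choose_two_right]
  have := Finset.sum_range_id_mul_two m
  omega

lemma card_main' (n : ℕ) :
    Nat.card {p : List Step // p.length = n ∧ IsMotzkin p ∧ plt p = 2}
      = ∑ m ∈ Finset.range (n+1), m.choose 2 * n.choose (2*m) := by
  classical
  rw [card_main n]
  rw [T, Finset.sum_filter, Finset.sum_product]
  apply Finset.sum_congr rfl
  intro m hm
  have e1 : (∑ y ∈ (Finset.range (n+1)) ×ˢ (Finset.range (n+1)),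
      if 1 ≤ (m, y).2.2 ∧ (m, y).2.2 ≤ (m, y).2.1 ∧ (m, y).2.1 + 1 ≤ (m, y).1
        then n.choose (2 * (m, y).1) else 0)
      = ∑ y ∈ (Finset.range (n+1)) ×ˢ (Finset.range (n+1)),
        if 1 ≤ y.2 ∧ y.2 ≤ y.1 ∧ y.1 + 1 ≤ m then n.choose (2 * m) else 0 := rfl
  rw [e1, ← Finset.sum_filter, Finset.sum_const, pairs_card n m (by
    simp only [Finset.mem_range] at hm; omega), smul_eq_mul]


-- ## The binomial identity in ℚ

lemma absorb (n k : ℕ) :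
    ((k : ℚ) + 1) * ((n+1).choose (k+1)) = ((n : ℚ) + 1) * (n.choose k) := by
  have h := Nat.add_one_mul_choose_eq n k
  have h2 : ((n.succ * n.choose k : ℕ) : ℚ) = ((n.succ.choose k.succ * k.succ : ℕ) : ℚ) := by
    rw [h]
  push_cast at h2
  linarith [h2]

lemma sumA (n : ℕ) : ∑ k ∈ Finset.range (n+1), ((n.choose k : ℕ) : ℚ) = 2^n := by
  have h := congrArg (fun x : ℕ => (x : ℚ)) (Nat.sum_range_choose n)
  push_cast at h
  exact h

lemma sumB (n : ℕ) (hn : 1 ≤ n) :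
    ∑ k ∈ Finset.range (n+1), (k : ℚ) * n.choose k = n * 2^(n-1) := by
  obtain ⟨n', rfl⟩ : ∃ n', n = n' + 1 := ⟨n - 1, by omega⟩
  rw [Finset.sum_range_succ' (fun k => (k : ℚ) * (n'+1).choose k)]
  have e1 : ∀ j ∈ Finset.range (n'+1),
      ((j + 1 : ℕ) : ℚ) * ((n'+1).choose (j+1)) = ((n' : ℚ) + 1) * n'.choose j := by
    intro j _
    push_cast
    exact absorb n' j
  rw [Finset.sum_congr rfl e1, ← Finset.mul_sum, sumA n']
  push_cast
  simp

lemma sumC (n : ℕ) (hn : 2 ≤ n) :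
    ∑ k ∈ Finset.range (n+1), (k : ℚ) * ((k : ℚ) - 1) * n.choose k
      = n * ((n : ℚ) - 1) * 2^(n-2) := by
  obtain ⟨n', rfl⟩ : ∃ n', n = n' + 1 := ⟨n - 1, by omega⟩
  rw [Finset.sum_range_succ' (fun k => (k : ℚ) * ((k : ℚ) - 1) * (n'+1).choose k)]
  have e1 : ∀ j ∈ Finset.range (n'+1),
      ((j + 1 : ℕ) : ℚ) * (((j + 1 : ℕ) : ℚ) - 1) * ((n'+1).choose (j+1))
        = ((n' : ℚ) + 1) * ((j : ℚ) * n'.choose j) := by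
    intro j _
    have h := absorb n' j
    push_cast
    linear_combination (j : ℚ) * h
  rw [Finset.sum_congr rfl e1, ← Finset.mul_sum, sumB n' (by omega)]
  push_cast
  norm_num
  ring

lemma sumD (n : ℕ) (hn : 1 ≤ n) :
    ∑ k ∈ Finset.range (n+1), (-1 : ℚ)^k * n.choose k = 0 := by
  have h := add_pow (-1 : ℚ) 1 n
  simp only [one_pow, mul_one, neg_add_cancel, zero_pow (by omega : n ≠ 0)] at h
  exact h.symm

lemma sumE (n : ℕ) (hn : 2 ≤ n) :
    ∑ k ∈ Finset.range (n+1), (-1 : ℚ)^k * ((k : ℚ) * n.choose k) = 0 := by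
  obtain ⟨n', rfl⟩ : ∃ n', n = n' + 1 := ⟨n - 1, by omega⟩
  rw [Finset.sum_range_succ' (fun k => (-1 : ℚ)^k * ((k : ℚ) * (n'+1).choose k))]
  have e1 : ∀ j ∈ Finset.range (n'+1),
      (-1 : ℚ)^(j+1) * (((j + 1 : ℕ) : ℚ) * ((n'+1).choose (j+1)))
        = (-((n' : ℚ) + 1)) * ((-1 : ℚ)^j * n'.choose j) := by
    intro j _
    have h := absorb n' j
    push_cast
    rw [pow_succ]
    linear_combination ((-1 : ℚ)^j * (-1)) * h
  rw [Finset.sum_congr rfl e1, ← Finset.mul_sum, sumD n' (by omega)]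
  simp

lemma sumF (n : ℕ) (hn : 3 ≤ n) :
    ∑ k ∈ Finset.range (n+1), (-1 : ℚ)^k * ((k : ℚ) * ((k : ℚ) - 1) * n.choose k) = 0 := by
  obtain ⟨n', rfl⟩ : ∃ n', n = n' + 1 := ⟨n - 1, by omega⟩
  rw [Finset.sum_range_succ'
    (fun k => (-1 : ℚ)^k * ((k : ℚ) * ((k : ℚ) - 1) * (n'+1).choose k))]
  have e1 : ∀ j ∈ Finset.range (n'+1),
      (-1 : ℚ)^(j+1) * (((j + 1 : ℕ) : ℚ) * (((j + 1 : ℕ) : ℚ) - 1) * ((n'+1).choose (j+1)))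
        = (-((n' : ℚ) + 1)) * ((-1 : ℚ)^j * ((j : ℚ) * n'.choose j)) := by
    intro j _
    have h := absorb n' j
    push_cast
    rw [pow_succ]
    linear_combination ((-1 : ℚ)^j * (-1) * (j : ℚ)) * h
  rw [Finset.sum_congr rfl e1, ← Finset.mul_sum, sumE n' (by omega)]
  simp

lemma sum_even_reindex (N : ℕ) (f : ℕ → ℚ) :
    ∑ k ∈ Finset.range (2*N), (if Even k then f k else 0) = ∑ m ∈ Finset.range N, f (2*m) := by
  induction N with
  | zero => simp
  | succ N ih =>
    have e : 2*(N+1) = (2*N) + 1 + 1 := by ring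
    have ho : ¬ Even (2*N+1) := by
      rw [Nat.even_add_one, not_not]
      exact even_two_mul N
    have hp : Even (2*N) := even_two_mul N
    rw [e, Finset.sum_range_succ, Finset.sum_range_succ, ih, if_pos hp, if_neg ho,
      Finset.sum_range_succ]
    ring


lemma qsum (n : ℕ) (hn : 3 ≤ n) :
    ((∑ m ∈ Finset.range (n+1), m.choose 2 * n.choose (2*m) : ℕ) : ℚ)
      = ((n : ℚ) - 3) * (n : ℚ) * (2 : ℚ) ^ ((n : ℤ) - 6) := by
  push_cast
  have h0 : (∑ m ∈ Finset.range (n+1), (m.choose 2 : ℚ) * n.choose (2*m))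
      = ∑ k ∈ Finset.range (2*(n+1)),
          (if Even k then ((k/2).choose 2 : ℚ) * n.choose k else 0) := by
    rw [sum_even_reindex (n+1) (fun k => ((k/2).choose 2 : ℚ) * n.choose k)]
    apply Finset.sum_congr rfl
    intro m _
    have e : 2 * m / 2 = m := by omega
    rw [e]
  rw [h0]
  have h1 : ∀ k : ℕ, (if Even k then ((k/2).choose 2 : ℚ) * n.choose k else 0)
      = (((k:ℚ) * ((k:ℚ)-1) * n.choose k - (k:ℚ) * n.choose k)
        + ((-1:ℚ)^k * ((k:ℚ) * ((k:ℚ)-1) * n.choose k)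
          - (-1:ℚ)^k * ((k:ℚ) * n.choose k))) / 16 := by
    intro k
    rcases Nat.even_or_odd k with hk | hk
    · rw [if_pos hk]
      obtain ⟨r, rfl⟩ := hk
      have hr : (r + r) / 2 = r := by omega
      rw [hr, Nat.cast_choose_two, Even.neg_one_pow ⟨r, rfl⟩]
      push_cast
      ring
    · rw [if_neg (Nat.not_even_iff_odd.mpr hk), Odd.neg_one_pow hk]
      ring
  rw [Finset.sum_congr rfl (fun k _ => h1 k), ← Finset.sum_div, Finset.sum_add_distrib,
    Finset.sum_sub_distrib, Finset.sum_sub_distrib]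
  have hsub : Finset.range (n+1) ⊆ Finset.range (2*(n+1)) := by
    intro x hx
    simp only [Finset.mem_range] at hx ⊢
    omega
  have hch : ∀ k ∈ Finset.range (2*(n+1)), k ∉ Finset.range (n+1) →
      ((n.choose k : ℕ) : ℚ) = 0 := by
    intro k _ hk
    simp only [Finset.mem_range, not_lt] at hk
    rw [Nat.choose_eq_zero_of_lt (by omega)]
    norm_num
  have s1 : ∑ k ∈ Finset.range (2*(n+1)), (k:ℚ) * ((k:ℚ)-1) * n.choose k
      = ∑ k ∈ Finset.range (n+1), (k:ℚ) * ((k:ℚ)-1) * n.choose k :=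
    (Finset.sum_subset hsub (fun k hk1 hk2 => by rw [hch k hk1 hk2, mul_zero])).symm
  have s2 : ∑ k ∈ Finset.range (2*(n+1)), (k:ℚ) * n.choose k
      = ∑ k ∈ Finset.range (n+1), (k:ℚ) * n.choose k :=
    (Finset.sum_subset hsub (fun k hk1 hk2 => by rw [hch k hk1 hk2, mul_zero])).symm
  have s3 : ∑ k ∈ Finset.range (2*(n+1)), (-1:ℚ)^k * ((k:ℚ) * ((k:ℚ)-1) * n.choose k)
      = ∑ k ∈ Finset.range (n+1), (-1:ℚ)^k * ((k:ℚ) * ((k:ℚ)-1) * n.choose k) :=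
    (Finset.sum_subset hsub (fun k hk1 hk2 => by
      rw [hch k hk1 hk2, mul_zero, mul_zero])).symm
  have s4 : ∑ k ∈ Finset.range (2*(n+1)), (-1:ℚ)^k * ((k:ℚ) * n.choose k)
      = ∑ k ∈ Finset.range (n+1), (-1:ℚ)^k * ((k:ℚ) * n.choose k) :=
    (Finset.sum_subset hsub (fun k hk1 hk2 => by
      rw [hch k hk1 hk2, mul_zero, mul_zero])).symm
  rw [s1, s2, s3, s4, sumC n (by omega), sumB n (by omega), sumF n hn, sumE n (by omega)]
  have hz : (2:ℚ) ^ ((n:ℤ) - 6) = (2:ℚ)^(n-2) / 2^4 := by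
    have e : (n:ℤ) - 6 = ((n-2 : ℕ) : ℤ) - 4 := by omega
    rw [e, zpow_sub₀ (by norm_num : (2:ℚ) ≠ 0), zpow_natCast]
    norm_num
  have hp : (2:ℚ)^(n-1) = 2^(n-2) * 2 := by
    have e : n - 1 = (n-2) + 1 := by omega
    rw [e, pow_succ]
  rw [hz, hp]
  ring

end MP

/-- The number of Motzkin paths of length n ≥ 3 with exactly two plateaus is
(n−3)·n·2^(n−6), interpreted in ℚ. -/
theorem motzkin_two_plateaus (n : ℕ) (hn : 3 ≤ n) :
    (Nat.card {p : List Step // p.length = n ∧ IsMotzkin p ∧ plt p = 2} : ℚ)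
      = ((n : ℚ) - 3) * (n : ℚ) * (2 : ℚ) ^ ((n : ℤ) - 6) := by
  rw [MP.card_main' n]
  exact MP.qsum n hn
end
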